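/- arXiv:2403.06850 — 3 statements merged into one kernel-verified Lean document; each statement's English description precedes it below -/
import Mathlib

section
/- For every prime power k ≥ 3 there exists a hypergraph H' in the class ℋ_k whose chromatic index satisfies q(H') = 2k − 1. -/
set_option linter.unusedSectionVars false
open Finset

variable {V : Type*}

/-- The degree of a vertex `x`: number of hyperedges containing `x`. -/
def hyperDeg [DecidableEq V] (E : Finset (Finset V)) (x : V) : ℕ :=
  (E.filter fun e => x ∈ e).card

/-- A hypergraph is linear if two distinct hyperedges share at most one vertex. -/
def Linear [DecidableEq V] (E : Finset (Finset V)) : Prop :=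
  ∀ e ∈ E, ∀ f ∈ E, e ≠ f → (e ∩ f).card ≤ 1

/-- The degree of a hyperedge `e`: number of other hyperedges meeting `e`. -/
def edgeDeg [DecidableEq V] (E : Finset (Finset V)) (e : Finset V) : ℕ :=
  (E.filter fun a => a ≠ e ∧ (a ∩ e).Nonempty).card

/-- Degree of a vertex in the 2-section of the hypergraph. -/
def deg2 [Fintype V] [DecidableEq V] (E : Finset (Finset V)) (x : V) : ℕ :=
  (Finset.univ.filter fun y => y ≠ x ∧ ∃ e ∈ E, x ∈ e ∧ y ∈ e).card

/-- Maximum degree of the 2-section. -/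
def maxDeg2 [Fintype V] [DecidableEq V] (E : Finset (Finset V)) : ℕ :=
  Finset.univ.sup (deg2 E)

/-- Minimum degree of the 2-section. -/
noncomputable def minDeg2 [Fintype V] [DecidableEq V] (E : Finset (Finset V)) : ℕ :=
  sInf (Set.range (deg2 E))

/-- Maximum vertex degree of the hypergraph. -/
def maxDeg [Fintype V] [DecidableEq V] (E : Finset (Finset V)) : ℕ :=
  Finset.univ.sup (hyperDeg E)

/-- A proper hyperedge coloring with `q` colors. -/
def ColorableWith [DecidableEq V] (E : Finset (Finset V)) (q : ℕ) : Prop :=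
  ∃ c : Finset V → Fin q, ∀ e ∈ E, ∀ f ∈ E, e ≠ f → (e ∩ f).Nonempty → c e ≠ c f

/-- The chromatic index: least number of colors in a proper hyperedge coloring. -/
noncomputable def chromIndex [DecidableEq V] (E : Finset (Finset V)) : ℕ :=
  sInf {q | ColorableWith E q}


section Construction
variable {F : Type} [Field F] [Fintype F] [DecidableEq F]

/-- the line y = m x + b -/
def lineF (m b : F) : Finset (F × F) := univ.image fun x => (x, m*x+b)

/-- the vertical line x = a -/
def vertF (a : F) : Finset (F × F) := univ.image fun y => (a, y)

/-- the bent row: (0,0) together with the row y minus (y,y) -/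
def browF (y : F) : Finset (F × F) :=
  insert ((0:F),(0:F)) ((univ.filter (· ≠ y)).image fun x => (x, y))

@[simp] lemma mem_lineF {m b : F} {p : F × F} : p ∈ lineF m b ↔ p.2 = m * p.1 + b := by
  constructor
  · intro h
    simp only [lineF, mem_image] at h
    obtain ⟨x, -, rfl⟩ := h
    rfl
  · intro h
    simp only [lineF, mem_image]
    exact ⟨p.1, mem_univ _, by rw [← h]⟩

@[simp] lemma mem_vertF {a : F} {p : F × F} : p ∈ vertF a ↔ p.1 = a := by
  constructor
  · intro h
    simp only [vertF, mem_image] at h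
    obtain ⟨x, -, rfl⟩ := h
    rfl
  · intro h
    simp only [vertF, mem_image]
    exact ⟨p.2, mem_univ _, by rw [← h]⟩

@[simp] lemma mem_browF {y : F} {p : F × F} :
    p ∈ browF y ↔ p = (0,0) ∨ (p.2 = y ∧ p.1 ≠ y) := by
  simp only [browF, mem_insert, mem_image, mem_filter, mem_univ, true_and]
  constructor
  · rintro (h | ⟨x, hx, rfl⟩)
    · exact Or.inl h
    · exact Or.inr ⟨rfl, hx⟩
  · rintro (h | ⟨h2, h1⟩)
    · exact Or.inl h
    · exact Or.inr ⟨p.1, h1, by rw [← h2]⟩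

lemma lineF_inj {m b m' b' : F} (h : lineF m b = lineF m' b') : m = m' ∧ b = b' := by
  have h0 : ((0:F), b) ∈ lineF m' b' := by rw [← h]; simp
  have h1 : ((1:F), m + b) ∈ lineF m' b' := by rw [← h]; simp
  simp only [mem_lineF] at h0 h1
  constructor
  · have := h1; rw [mul_zero, zero_add] at h0; rw [mul_one] at h1
    -- b = b', m + b = m' + b'
    have hb : b = b' := h0
    linear_combination h1 - hb
  · rw [mul_zero, zero_add] at h0; exact h0

lemma vertF_inj {a a' : F} (h : vertF a = vertF a') : a = a' := by
  have : ((a:F), (0:F)) ∈ vertF a' := by rw [← h]; simp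
  simpa using this

lemma browF_inj {y y' : F} (hy : y ≠ 0) (h : browF y = browF y') : y = y' := by
  by_contra hne
  have : ((y':F), y) ∈ browF y := by simp [Ne.symm hne]
  rw [h] at this
  simp only [mem_browF, Prod.mk.injEq] at this
  rcases this with ⟨-, h2⟩ | ⟨h2, -⟩
  · exact hy h2
  · exact hne h2

lemma lineF_ne_vertF {m b a : F} : lineF m b ≠ vertF a := by
  intro h
  have h0 : ((a:F), m*a+b) ∈ vertF a := by rw [← h]; simp
  have h1 : ((a:F), m*a+b+1) ∈ lineF m b := by
    rw [h]; simp
  simp only [mem_lineF] at h1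
  have : (1:F) = 0 := by linear_combination h1
  exact one_ne_zero this

lemma exists_two_ne (hF : 3 ≤ Fintype.card F) (y : F) :
    ∃ x₁ x₂ : F, x₁ ≠ y ∧ x₂ ≠ y ∧ x₁ ≠ x₂ := by
  have h2 : 2 ≤ (univ.erase y).card := by
    rw [card_erase_of_mem (mem_univ _), card_univ]; omega
  obtain ⟨x₁, hx₁, x₂, hx₂, hne⟩ := Finset.one_lt_card.mp h2
  exact ⟨x₁, x₂, (mem_erase.mp hx₁).1, (mem_erase.mp hx₂).1, hne⟩

lemma lineF_ne_browF (hF : 3 ≤ Fintype.card F) {m b y : F} (hy : y ≠ 0) :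
    lineF m b ≠ browF y := by
  intro h
  have h0 : ((0:F),(0:F)) ∈ lineF m b := by rw [h]; simp
  simp only [mem_lineF, mul_zero, zero_add] at h0
  obtain ⟨x₁, x₂, h1, h2, hne⟩ := exists_two_ne hF y
  have m1 : ((x₁:F), y) ∈ lineF m b := by rw [h]; simp [h1]
  have m2 : ((x₂:F), y) ∈ lineF m b := by rw [h]; simp [h2]
  simp only [mem_lineF] at m1 m2
  have hm : m = 0 := by
    have : m * (x₁ - x₂) = 0 := by linear_combination m2 - m1
    rcases mul_eq_zero.mp this with h | h
    · exact h
    · exact absurd (by linear_combination h) hne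
  apply hy
  rw [hm] at m1
  simp only [zero_mul, zero_add] at m1
  rw [m1, h0.symm]

lemma vertF_ne_browF {a y : F} (ha : a ≠ 0) : vertF a ≠ browF y := by
  intro h
  have : ((0:F),(0:F)) ∈ vertF a := by rw [h]; simp
  simp only [mem_vertF] at this
  exact ha this.symm


/-- allowed parameters for lines in the edge set -/
def OKP (m b : F) : Prop := (m = 0 ∧ b = 0) ∨ (m = 1 ∧ b = 0) ∨ (m ≠ 0 ∧ b ≠ 0)

variable (F) in
/-- The edge set of the construction. -/
def EE : Finset (Finset (F × F)) :=
  (({lineF 0 0, lineF 1 0} : Finset (Finset (F × F)))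
  ∪ ((univ.erase (0:F)).image browF))
  ∪ ((((univ.erase (0:F)) ×ˢ (univ.erase (0:F))).image fun p => lineF p.1 p.2)
  ∪ ((univ.erase (0:F)).image vertF))

lemma mem_EE {f : Finset (F × F)} :
    f ∈ EE F ↔ (∃ m b : F, OKP m b ∧ f = lineF m b) ∨ (∃ y : F, y ≠ 0 ∧ f = browF y)
      ∨ (∃ a : F, a ≠ 0 ∧ f = vertF a) := by
  simp only [EE, mem_union, mem_insert, mem_singleton, mem_image, mem_product, mem_erase,
    mem_univ, and_true, Finset.mem_mk]
  constructor
  · rintro (((h | h) | ⟨y, hy, rfl⟩) | (⟨⟨m, b⟩, ⟨hm, hb⟩, rfl⟩ | ⟨a, ha, rfl⟩))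
    · exact Or.inl ⟨0, 0, Or.inl ⟨rfl, rfl⟩, h⟩
    · exact Or.inl ⟨1, 0, Or.inr (Or.inl ⟨rfl, rfl⟩), h⟩
    · exact Or.inr (Or.inl ⟨y, hy, rfl⟩)
    · exact Or.inl ⟨m, b, Or.inr (Or.inr ⟨hm, hb⟩), rfl⟩
    · exact Or.inr (Or.inr ⟨a, ha, rfl⟩)
  · rintro (⟨m, b, (⟨rfl, rfl⟩ | ⟨rfl, rfl⟩ | ⟨hm, hb⟩), rfl⟩ | ⟨y, hy, rfl⟩ | ⟨a, ha, rfl⟩)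
    · exact Or.inl (Or.inl (Or.inl rfl))
    · exact Or.inl (Or.inl (Or.inr rfl))
    · exact Or.inr (Or.inl ⟨⟨m, b⟩, ⟨hm, hb⟩, rfl⟩)
    · exact Or.inl (Or.inr ⟨y, hy, rfl⟩)
    · exact Or.inr (Or.inr ⟨a, ha, rfl⟩)

lemma card_lineF (m b : F) : (lineF m b).card = Fintype.card F := by
  rw [lineF, card_image_of_injective _ (fun x y h => (Prod.mk.injEq _ _ _ _ ▸ h).1), card_univ]

lemma card_vertF (a : F) : (vertF a).card = Fintype.card F := by
  rw [vertF, card_image_of_injective _ (fun x y h => (Prod.mk.injEq _ _ _ _ ▸ h).2), card_univ]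

lemma card_browF {y : F} (hy : y ≠ 0) : (browF y).card = Fintype.card F := by
  rw [browF, card_insert_of_notMem, card_image_of_injective _
    (fun x y h => (Prod.mk.injEq _ _ _ _ ▸ h).1)]
  · rw [filter_ne', card_erase_of_mem (mem_univ _), card_univ]
    have : 1 ≤ Fintype.card F := Fintype.card_pos
    omega
  · simp only [mem_image, mem_filter, mem_univ, true_and, Prod.mk.injEq, not_exists, not_and]
    intro x _ h
    exact fun h0 => hy h0


lemma disj12 (hF3 : 3 ≤ Fintype.card F) :
    Disjoint ({lineF 0 0, lineF (1:F) 0} : Finset (Finset (F × F)))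
      ((univ.erase (0:F)).image browF) := by
  simp only [disjoint_left, mem_insert, mem_singleton, mem_image, mem_erase]
  rintro f (rfl | rfl) ⟨y, ⟨hy, -⟩, h⟩
  · exact lineF_ne_browF hF3 hy h.symm
  · exact lineF_ne_browF hF3 hy h.symm

lemma disj34 : Disjoint ((((univ.erase (0:F)) ×ˢ (univ.erase (0:F))).image
    fun p : F × F => lineF p.1 p.2)) ((univ.erase (0:F)).image vertF) := by
  simp only [disjoint_left, mem_image, mem_erase]
  rintro f ⟨p, -, rfl⟩ ⟨a, -, h⟩
  exact lineF_ne_vertF h.symm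

lemma disjAB (hF3 : 3 ≤ Fintype.card F) :
    Disjoint (({lineF 0 0, lineF (1:F) 0} : Finset (Finset (F × F)))
      ∪ ((univ.erase (0:F)).image browF))
      (((((univ.erase (0:F)) ×ˢ (univ.erase (0:F))).image fun p : F × F => lineF p.1 p.2))
      ∪ ((univ.erase (0:F)).image vertF)) := by
  simp only [disjoint_left, mem_union, mem_insert, mem_singleton, mem_image, mem_erase,
    mem_product]
  rintro f ((rfl | rfl) | ⟨y, ⟨hy, -⟩, rfl⟩) (⟨⟨m, b⟩, ⟨⟨hm, -⟩, ⟨hb, -⟩⟩, h⟩ | ⟨a, ⟨ha, -⟩, h⟩)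
  · exact hm (lineF_inj h).1
  · exact lineF_ne_vertF h.symm
  · exact hb (lineF_inj h).2
  · exact lineF_ne_vertF h.symm
  · exact lineF_ne_browF hF3 hy h
  · exact vertF_ne_browF ha h

lemma card_EE (hF3 : 3 ≤ Fintype.card F) : (EE F).card = Fintype.card F ^ 2 + 1 := by
  set k := Fintype.card F with hk
  have hbrow_inj : Set.InjOn browF ((univ.erase (0:F) : Finset F) : Set F) := by
    intro y hy y' _ h
    exact browF_inj (mem_erase.mp hy).1 h
  have hline_inj : Set.InjOn (fun p : F × F => lineF p.1 p.2)
      (((univ.erase (0:F)) ×ˢ (univ.erase (0:F)) : Finset (F × F)) : Set (F × F)) := by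
    intro p _ q _ h
    have := lineF_inj h
    exact Prod.ext this.1 this.2
  have hvert_inj : Set.InjOn vertF ((univ.erase (0:F) : Finset F) : Set F) := by
    intro y _ y' _ h
    exact vertF_inj h
  have c1 : ({lineF 0 0, lineF (1:F) 0} : Finset (Finset (F × F))).card = 2 := by
    rw [card_insert_of_notMem, card_singleton]
    simp only [mem_singleton]
    intro h
    have := (lineF_inj h).1
    exact one_ne_zero this.symm
  have cerase : (univ.erase (0:F)).card = k - 1 := by
    rw [card_erase_of_mem (mem_univ _), card_univ]
  have c2 : ((univ.erase (0:F)).image browF).card = k - 1 := by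
    rw [card_image_of_injOn hbrow_inj, cerase]
  have c3 : ((((univ.erase (0:F)) ×ˢ (univ.erase (0:F))).image
      fun p : F × F => lineF p.1 p.2).card) = (k-1) * (k-1) := by
    rw [card_image_of_injOn hline_inj, card_product, cerase]
  have c4 : ((univ.erase (0:F)).image vertF).card = k - 1 := by
    rw [card_image_of_injOn hvert_inj, cerase]
  have d12 : Disjoint ({lineF 0 0, lineF (1:F) 0} : Finset (Finset (F × F)))
      ((univ.erase (0:F)).image browF) := by
    simp only [disjoint_left, mem_insert, mem_singleton, mem_image, mem_erase]
    rintro f (rfl | rfl) ⟨y, ⟨hy, -⟩, h⟩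
    · exact lineF_ne_browF hF3 hy h.symm
    · exact lineF_ne_browF hF3 hy h.symm
  have d34 : Disjoint ((((univ.erase (0:F)) ×ˢ (univ.erase (0:F))).image
      fun p : F × F => lineF p.1 p.2)) ((univ.erase (0:F)).image vertF) := by
    simp only [disjoint_left, mem_image, mem_erase]
    rintro f ⟨p, -, rfl⟩ ⟨a, -, h⟩
    exact lineF_ne_vertF h.symm
  have dAB : Disjoint (({lineF 0 0, lineF (1:F) 0} : Finset (Finset (F × F)))
      ∪ ((univ.erase (0:F)).image browF))
      (((((univ.erase (0:F)) ×ˢ (univ.erase (0:F))).image fun p : F × F => lineF p.1 p.2))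
      ∪ ((univ.erase (0:F)).image vertF)) := by
    simp only [disjoint_left, mem_union, mem_insert, mem_singleton, mem_image, mem_erase,
      mem_product]
    rintro f ((rfl | rfl) | ⟨y, ⟨hy, -⟩, rfl⟩) (⟨⟨m, b⟩, ⟨⟨hm, -⟩, ⟨hb, -⟩⟩, h⟩ | ⟨a, ⟨ha, -⟩, h⟩)
    · exact hm (lineF_inj h).1
    · exact lineF_ne_vertF h.symm
    · exact hb (lineF_inj h).2
    · exact lineF_ne_vertF h.symm
    · exact lineF_ne_browF hF3 hy h
    · exact vertF_ne_browF ha h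
  rw [EE, card_union_of_disjoint dAB, card_union_of_disjoint d12, card_union_of_disjoint d34,
    c1, c2, c3, c4]
  obtain ⟨t, ht⟩ : ∃ t, k = t + 3 := ⟨k - 3, by omega⟩
  rw [ht]
  have e1 : t + 3 - 1 = t + 2 := by omega
  rw [e1]; ring

lemma inter_line_line {m b m' b' : F} (h : lineF m b ≠ lineF m' b') :
    (lineF m b ∩ lineF m' b').card ≤ 1 := by
  rw [card_le_one]
  intro p hp q hq
  rw [mem_inter, mem_lineF, mem_lineF] at hp hq
  by_cases hm : m = m'
  · subst hm
    exfalso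
    have hb : b = b' := by linear_combination hp.2 - hp.1
    rw [hb] at h
    exact h rfl
  · have h1 : (m - m') * p.1 = (m - m') * q.1 := by
      linear_combination (hp.2 - hp.1) - (hq.2 - hq.1)
    have h2 : p.1 = q.1 := mul_left_cancel₀ (sub_ne_zero.mpr hm) h1
    have h3 : p.2 = q.2 := by rw [hp.1, hq.1, h2]
    exact Prod.ext h2 h3

lemma inter_line_vert {m b a : F} : (lineF m b ∩ vertF a).card ≤ 1 := by
  rw [card_le_one]
  intro p hp q hq
  rw [mem_inter, mem_lineF, mem_vertF] at hp hq
  have h2 : p.2 = q.2 := by rw [hp.1, hq.1, hp.2, hq.2]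
  exact Prod.ext (hp.2.trans hq.2.symm) h2

lemma inter_line_brow {m b y : F} (hOK : OKP m b) (hy : y ≠ 0) :
    (lineF m b ∩ browF y).card ≤ 1 := by
  rw [card_le_one]
  intro p hp q hq
  rw [mem_inter, mem_lineF, mem_browF] at hp hq
  -- auxiliary: an element of the intersection which is not (0,0) has m ≠ 0 and determines x
  have key : ∀ r : F × F, r.2 = m * r.1 + b → (r = (0,0) ∨ (r.2 = y ∧ r.1 ≠ y)) →
      (r = (0,0) ∧ b = 0) ∨ (r.2 = y ∧ r.1 ≠ y) := by
    rintro r hr (h0 | h1)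
    · left
      refine ⟨h0, ?_⟩
      rw [h0] at hr
      simp only [mul_zero, zero_add] at hr
      exact hr.symm
    · right; exact h1
  rcases key p hp.1 hp.2 with ⟨hp0, hb0⟩ | ⟨hpy, hpx⟩ <;>
    rcases key q hq.1 hq.2 with ⟨hq0, hb0'⟩ | ⟨hqy, hqx⟩
  · rw [hp0, hq0]
  · -- p = (0,0), b = 0, q on the row: y = m * q.1, with OKP: m = 0 or m = 1 leads to contra
    exfalso
    rcases hOK with ⟨hm, -⟩ | ⟨hm, -⟩ | ⟨-, hb⟩
    · apply hy
      have := hq.1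
      rw [hm, hb0] at this
      simp only [hb0, mul_zero, zero_mul, zero_add, add_zero] at this
      rw [hqy] at this; exact this
    · apply hqx
      have := hq.1
      rw [hm, hb0] at this
      simp only [one_mul, add_zero] at this
      rw [← hqy, this]
    · exact hb hb0
  · exfalso
    rcases hOK with ⟨hm, -⟩ | ⟨hm, -⟩ | ⟨-, hb⟩
    · apply hy
      have := hp.1
      rw [hm, hb0'] at this
      simp only [hb0', mul_zero, zero_mul, zero_add, add_zero] at this
      rw [hpy] at this; exact this
    · apply hpx
      have := hp.1
      rw [hm, hb0'] at this
      simp only [one_mul, add_zero] at this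
      rw [← hpy, this]
    · exact hb hb0'
  · -- both on the row: second coords both y; m ≠ 0 forces equal first coords
    have hm : m ≠ 0 := by
      rcases hOK with ⟨hm, hb⟩ | ⟨hm, -⟩ | ⟨hm, -⟩
      · exfalso
        apply hy
        have := hp.1
        rw [hm, hb] at this
        simp only [hb, mul_zero, zero_mul, zero_add, add_zero] at this
        rw [hpy] at this; exact this
      · rw [hm]; exact one_ne_zero
      · exact hm
    have h1 : m * p.1 = m * q.1 := by
      have e1 := hp.1; have e2 := hq.1
      rw [hpy] at e1; rw [hqy] at e2
      linear_combination e2 - e1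
    have h2 : p.1 = q.1 := mul_left_cancel₀ hm h1
    exact Prod.ext h2 (hpy.trans hqy.symm)

lemma inter_brow_brow {y y' : F} (hne : y ≠ y') : (browF y ∩ browF y').card ≤ 1 := by
  rw [card_le_one]
  intro p hp q hq
  rw [mem_inter, mem_browF, mem_browF] at hp hq
  have key : ∀ r : F × F, (r = (0,0) ∨ (r.2 = y ∧ r.1 ≠ y)) →
      (r = (0,0) ∨ (r.2 = y' ∧ r.1 ≠ y')) → r = (0,0) := by
    rintro r (h | h) (h' | h')
    · exact h
    · exact h
    · exact h'
    · exact absurd (h.1.symm.trans h'.1) hne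
  rw [key p hp.1 hp.2, key q hq.1 hq.2]

lemma inter_brow_vert {y a : F} (ha : a ≠ 0) : (browF y ∩ vertF a).card ≤ 1 := by
  rw [card_le_one]
  intro p hp q hq
  rw [mem_inter, mem_browF, mem_vertF] at hp hq
  have key : ∀ r : F × F, (r = (0,0) ∨ (r.2 = y ∧ r.1 ≠ y)) → r.1 = a → r = (a, y) := by
    rintro r (h | h) h1
    · exfalso; apply ha; rw [← h1, h]
    · rw [← h1, ← h.1]
  rw [key p hp.1 hp.2, key q hq.1 hq.2]

lemma inter_vert_vert {a a' : F} (hne : a ≠ a') : (vertF a ∩ vertF a').card ≤ 1 := by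
  rw [card_le_one]
  intro p hp q hq
  rw [mem_inter, mem_vertF, mem_vertF] at hp
  exact absurd (hp.1.symm.trans hp.2) hne

lemma linear_EE (hF3 : 3 ≤ Fintype.card F) :
    ∀ e ∈ EE F, ∀ f ∈ EE F, e ≠ f → (e ∩ f).card ≤ 1 := by
  intro e he f hf hne
  rw [mem_EE] at he hf
  rcases he with ⟨m, b, hOK, rfl⟩ | ⟨y, hy, rfl⟩ | ⟨a, ha, rfl⟩ <;>
    rcases hf with ⟨m', b', hOK', rfl⟩ | ⟨y', hy', rfl⟩ | ⟨a', ha', rfl⟩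
  · exact inter_line_line hne
  · exact inter_line_brow hOK hy'
  · exact inter_line_vert
  · rw [inter_comm]; exact inter_line_brow hOK' hy
  · exact inter_brow_brow (fun h => hne (by rw [h]))
  · exact inter_brow_vert ha'
  · rw [inter_comm]; exact inter_line_vert
  · rw [inter_comm]; exact inter_brow_vert ha
  · exact inter_vert_vert (fun h => hne (by rw [h]))

lemma card_filter_ne_two (hF3 : 3 ≤ Fintype.card F) {c : F} (hc : c ≠ 0) :
    (univ.filter fun m : F => m ≠ 0 ∧ m ≠ c).card = Fintype.card F - 2 := by
  have h : (univ.filter fun m : F => m ≠ 0 ∧ m ≠ c) = univ \ {0, c} := by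
    ext m
    simp [mem_sdiff, and_comm]
  rw [h, card_sdiff_of_subset (subset_univ _), card_univ]
  congr 1
  rw [card_insert_of_notMem (by simp [hc.symm]), card_singleton]

lemma card_filter_ne_one : (univ.filter fun m : F => m ≠ 0).card = Fintype.card F - 1 := by
  rw [filter_ne', card_erase_of_mem (mem_univ _), card_univ]

lemma deg_split (hF3 : 3 ≤ Fintype.card F) (x : F × F) :
    hyperDeg (EE F) x =
      ((({lineF 0 0, lineF (1:F) 0} : Finset (Finset (F × F)))).filter (fun e => x ∈ e)).card
      + (((univ.erase (0:F)).image browF).filter (fun e => x ∈ e)).card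
      + (((((univ.erase (0:F)) ×ˢ (univ.erase (0:F))).image
          fun p : F × F => lineF p.1 p.2)).filter (fun e => x ∈ e)).card
      + (((univ.erase (0:F)).image vertF).filter (fun e => x ∈ e)).card := by
  rw [hyperDeg, EE, filter_union, filter_union, filter_union,
    card_union_of_disjoint ((disjAB hF3).mono
      (union_subset_union (filter_subset _ _) (filter_subset _ _))
      (union_subset_union (filter_subset _ _) (filter_subset _ _))),
    card_union_of_disjoint ((disj12 hF3).mono (filter_subset _ _) (filter_subset _ _)),
    card_union_of_disjoint (disj34.mono (filter_subset _ _) (filter_subset _ _))]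
  ring

/-- count of brow edges through x -/
lemma count_brow (x : F × F) :
    (((univ.erase (0:F)).image browF).filter (fun e => x ∈ e)).card
      = ((univ.erase (0:F)).filter (fun y => x ∈ browF y)).card := by
  rw [filter_image, card_image_of_injOn]
  intro y hy y' _ h
  simp only [coe_filter, Set.mem_setOf_eq, mem_coe, mem_erase] at hy
  exact browF_inj hy.1.1 h

lemma count_vert (x : F × F) :
    (((univ.erase (0:F)).image vertF).filter (fun e => x ∈ e)).card
      = ((univ.erase (0:F)).filter (fun a => x ∈ vertF a)).card := by
  rw [filter_image, card_image_of_injOn]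
  intro y _ y' _ h
  exact vertF_inj h

lemma count_line (x : F × F) :
    (((((univ.erase (0:F)) ×ˢ (univ.erase (0:F))).image
        fun p : F × F => lineF p.1 p.2)).filter (fun e => x ∈ e)).card
      = ((univ.filter fun m : F => m ≠ 0 ∧ x.2 ≠ m * x.1).card) := by
  rw [filter_image, card_image_of_injOn]
  swap
  · intro p _ q _ h
    have := lineF_inj h
    exact Prod.ext this.1 this.2
  apply card_bij (fun p _ => p.1)
  · rintro ⟨m, b⟩ hp
    simp only [mem_filter, mem_product, mem_erase, mem_univ, and_true, mem_lineF] at hp ⊢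
    exact ⟨trivial, hp.1.1, fun h => hp.1.2 (by linear_combination h - hp.2)⟩
  · rintro ⟨m, b⟩ hp ⟨m', b'⟩ hq h
    simp only [mem_filter, mem_product, mem_erase, mem_univ, and_true, mem_lineF] at hp hq
    dsimp at h
    subst h
    have : b = b' := by linear_combination hq.2 - hp.2
    rw [this]
  · intro m hm
    simp only [mem_filter, mem_univ, true_and] at hm
    refine ⟨⟨m, x.2 - m * x.1⟩, ?_, rfl⟩
    simp only [mem_filter, mem_product, mem_erase, mem_univ, and_true, mem_lineF]
    exact ⟨⟨hm.1, fun h => hm.2 (by linear_combination h)⟩, by ring⟩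

lemma degEE_e0 (hF3 : 3 ≤ Fintype.card F) {x : F × F} (hx : x ∈ lineF (0:F) 0) :
    hyperDeg (EE F) x = Fintype.card F + 1 := by
  set k := Fintype.card F with hk
  rw [mem_lineF] at hx
  simp only [zero_mul, zero_add] at hx
  obtain ⟨a, b⟩ := x
  simp only at hx
  subst hx
  rw [deg_split hF3, count_brow, count_vert, count_line]
  dsimp only
  by_cases ha : a = 0
  · subst ha
    have h1 : ((({lineF 0 0, lineF (1:F) 0} : Finset (Finset (F × F)))).filter
        (fun e => ((0:F),(0:F)) ∈ e)).card = 2 := by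
      have hne : lineF (0:F) 0 ≠ lineF (1:F) 0 := fun h => one_ne_zero (lineF_inj h).1.symm
      rw [filter_insert, if_pos (by simp), filter_singleton, if_pos (by simp), card_pair hne]
    have h2 : ((univ.erase (0:F)).filter (fun y => ((0:F),(0:F)) ∈ browF y)) =
        univ.erase (0:F) := by
      apply filter_true_of_mem
      intro y _
      simp
    have h3 : (univ.filter fun m : F => m ≠ 0 ∧ (0:F) ≠ m * 0) = ∅ := by
      ext m; simp
    have h4 : ((univ.erase (0:F)).filter (fun a => ((0:F),(0:F)) ∈ vertF a)) = ∅ := by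
      ext a
      simp only [mem_filter, mem_erase, mem_vertF, notMem_empty, iff_false, not_and]
      rintro ⟨ha, -⟩ h
      exact ha h.symm
    rw [h1, h2, h3, h4]
    simp only [card_erase_of_mem (mem_univ _), card_univ, card_empty]
    omega
  · have h1 : ((({lineF 0 0, lineF (1:F) 0} : Finset (Finset (F × F)))).filter
        (fun e => ((a:F),(0:F)) ∈ e)).card = 1 := by
      rw [filter_insert, if_pos (by simp), filter_singleton, if_neg (by
        simp only [mem_lineF, one_mul, add_zero]; exact fun h => ha h.symm)]
      simp
    have h2 : ((univ.erase (0:F)).filter (fun y => ((a:F),(0:F)) ∈ browF y)) = ∅ := by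
      ext y
      simp only [mem_filter, mem_erase, mem_browF, Prod.mk.injEq, notMem_empty, iff_false,
        not_and]
      rintro ⟨hy, -⟩ (⟨h, -⟩ | ⟨h, -⟩)
      · exact ha h
      · exact hy h.symm
    have h3 : (univ.filter fun m : F => m ≠ 0 ∧ (0:F) ≠ m * a) =
        (univ.filter fun m : F => m ≠ 0) := by
      ext m
      simp only [mem_filter, mem_univ, true_and, and_iff_left_iff_imp]
      intro hm h
      rcases mul_eq_zero.mp h.symm with h' | h'
      · exact hm h'
      · exact ha h'
    have h4 : ((univ.erase (0:F)).filter (fun c => ((a:F),(0:F)) ∈ vertF c)) = {a} := by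
      ext c
      simp only [mem_filter, mem_erase, mem_vertF, mem_singleton, mem_univ, and_true]
      constructor
      · rintro ⟨-, h⟩; exact h.symm
      · rintro rfl; exact ⟨ha, rfl⟩
    rw [h1, h2, h3, h4, card_filter_ne_one, card_empty, card_singleton, ← hk]
    have : 3 ≤ k := hF3
    omega

lemma degEE_off (hF3 : 3 ≤ Fintype.card F) {x : F × F} (hx : x ∉ lineF (0:F) 0) :
    hyperDeg (EE F) x = Fintype.card F := by
  set k := Fintype.card F with hk
  rw [mem_lineF] at hx
  simp only [zero_mul, zero_add] at hx
  obtain ⟨a, b⟩ := x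
  simp only at hx
  -- hx : b ≠ 0
  rw [deg_split hF3, count_brow, count_vert, count_line]
  dsimp only
  have h1 : ((({lineF 0 0, lineF (1:F) 0} : Finset (Finset (F × F)))).filter
      (fun e => ((a:F),(b:F)) ∈ e)).card = if b = a then 1 else 0 := by
    rw [filter_insert, if_neg (by simp only [mem_lineF, zero_mul, zero_add]; exact hx),
      filter_singleton]
    by_cases hab : b = a
    · rw [if_pos (by simp only [mem_lineF, one_mul, add_zero]; exact hab), if_pos hab,
        card_singleton]
    · rw [if_neg (by simp only [mem_lineF, one_mul, add_zero]; exact hab), if_neg hab,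
        card_empty]
  have h2 : ((univ.erase (0:F)).filter (fun y => ((a:F),(b:F)) ∈ browF y)).card
      = if b = a then 0 else 1 := by
    by_cases hab : b = a
    · rw [if_pos hab]
      have : (univ.erase (0:F)).filter (fun y => ((a:F),(b:F)) ∈ browF y) = ∅ := by
        ext y
        simp only [mem_filter, mem_erase, mem_browF, Prod.mk.injEq, notMem_empty, iff_false,
          not_and, mem_univ, and_true]
        rintro hy (⟨-, h⟩ | ⟨h, h'⟩)
        · exact hx h
        · exact h' (hab.symm.trans h)
      rw [this, card_empty]
    · rw [if_neg hab]
      have : (univ.erase (0:F)).filter (fun y => ((a:F),(b:F)) ∈ browF y) = {b} := by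
        ext y
        simp only [mem_filter, mem_erase, mem_browF, Prod.mk.injEq, mem_singleton, mem_univ,
          and_true]
        constructor
        · rintro ⟨-, (⟨-, h⟩ | ⟨h, -⟩)⟩
          · exact absurd h hx
          · exact h.symm
        · rintro rfl
          exact ⟨hx, Or.inr ⟨rfl, fun h => hab h.symm⟩⟩
      rw [this, card_singleton]
  have h4 : ((univ.erase (0:F)).filter (fun c => ((a:F),(b:F)) ∈ vertF c)).card
      = if a = 0 then 0 else 1 := by
    by_cases ha : a = 0
    · rw [if_pos ha]
      have : (univ.erase (0:F)).filter (fun c => ((a:F),(b:F)) ∈ vertF c) = ∅ := by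
        ext c
        simp only [mem_filter, mem_erase, mem_vertF, notMem_empty, iff_false, not_and]
        rintro ⟨hc, -⟩ h
        exact hc (h.symm.trans ha)
      rw [this, card_empty]
    · rw [if_neg ha]
      have : (univ.erase (0:F)).filter (fun c => ((a:F),(b:F)) ∈ vertF c) = {a} := by
        ext c
        simp only [mem_filter, mem_erase, mem_vertF, mem_singleton, mem_univ, and_true]
        constructor
        · rintro ⟨-, h⟩; exact h.symm
        · rintro rfl; exact ⟨ha, rfl⟩
      rw [this, card_singleton]
  have h3 : (univ.filter fun m : F => m ≠ 0 ∧ (b:F) ≠ m * a).card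
      = if a = 0 then k - 1 else k - 2 := by
    by_cases ha : a = 0
    · rw [if_pos ha]
      subst ha
      have : (univ.filter fun m : F => m ≠ 0 ∧ (b:F) ≠ m * 0)
          = univ.filter (fun m : F => m ≠ 0) := by
        ext m
        simp only [mem_filter, mem_univ, true_and, mul_zero]
        exact ⟨fun h => h.1, fun h => ⟨h, hx⟩⟩
      rw [this, card_filter_ne_one]
    · rw [if_neg ha]
      have : (univ.filter fun m : F => m ≠ 0 ∧ (b:F) ≠ m * a)
          = univ.filter (fun m : F => m ≠ 0 ∧ m ≠ b * a⁻¹) := by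
        ext m
        simp only [mem_filter, mem_univ, true_and, and_congr_right_iff]
        intro _
        constructor
        · intro h h'
          apply h
          rw [h', mul_assoc, inv_mul_cancel₀ ha, mul_one]
        · intro h h'
          apply h
          field_simp [h']
          exact h'.symm
        
      rw [this, card_filter_ne_two hF3 (by
        intro h
        rcases mul_eq_zero.mp h with h' | h'
        · exact hx h'
        · exact ha (inv_eq_zero.mp h'))]
  rw [h1, h2, h3, h4]
  have hk3 : 3 ≤ k := hF3
  by_cases hab : b = a <;> by_cases ha : a = 0
  · exact absurd (hab.trans ha) hx
  · rw [if_pos hab, if_pos hab, if_neg ha, if_neg ha]; omega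
  · rw [if_neg hab, if_neg hab, if_pos ha, if_pos ha]; omega
  · rw [if_neg hab, if_neg hab, if_neg ha, if_neg ha]; omega

open scoped Classical in
/-- color value of an edge, given an encoding ψ of the field into ℕ -/
noncomputable def colC (ψ : F → ℕ) (s : Finset (F × F)) : ℕ :=
  if h : ∃ y : F, y ≠ 0 ∧ (s = browF y ∨ s = vertF y) then Fintype.card F - 1 + ψ h.choose
  else if h2 : ∃ m : F, m ≠ 0 ∧ ∃ b : F, s = lineF m b then ψ h2.choose
  else 0

lemma colC_brow (ψ : F → ℕ) {y : F} (hy : y ≠ 0) :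
    colC ψ (browF y) = Fintype.card F - 1 + ψ y := by
  have h : ∃ y' : F, y' ≠ 0 ∧ (browF y = browF y' ∨ browF y = vertF y') := ⟨y, hy, Or.inl rfl⟩
  rw [colC, dif_pos h]
  obtain ⟨hy', hor⟩ := h.choose_spec
  rcases hor with h1 | h1
  · rw [(browF_inj hy h1).symm]
  · exact absurd h1.symm (vertF_ne_browF hy')

lemma colC_vert (ψ : F → ℕ) {a : F} (ha : a ≠ 0) :
    colC ψ (vertF a) = Fintype.card F - 1 + ψ a := by
  have h : ∃ y' : F, y' ≠ 0 ∧ (vertF a = browF y' ∨ vertF a = vertF y') := ⟨a, ha, Or.inr rfl⟩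
  rw [colC, dif_pos h]
  obtain ⟨hy', hor⟩ := h.choose_spec
  rcases hor with h1 | h1
  · exact absurd h1 (vertF_ne_browF ha)
  · rw [(vertF_inj h1).symm]

lemma colC_line (hF3 : 3 ≤ Fintype.card F) (ψ : F → ℕ) {m b : F} (hm : m ≠ 0) :
    colC ψ (lineF m b) = ψ m := by
  have h : ¬ ∃ y' : F, y' ≠ 0 ∧ (lineF m b = browF y' ∨ lineF m b = vertF y') := by
    rintro ⟨y', hy', h1 | h1⟩
    · exact lineF_ne_browF hF3 hy' h1
    · exact lineF_ne_vertF h1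
  have h2 : ∃ m' : F, m' ≠ 0 ∧ ∃ b' : F, lineF m b = lineF m' b' := ⟨m, hm, b, rfl⟩
  rw [colC, dif_neg h, dif_pos h2]
  obtain ⟨hm', b', hb'⟩ := h2.choose_spec
  rw [(lineF_inj hb').1.symm]

lemma colC_axis (hF3 : 3 ≤ Fintype.card F) (ψ : F → ℕ) : colC ψ (lineF (0:F) 0) = 0 := by
  have h : ¬ ∃ y' : F, y' ≠ 0 ∧ (lineF (0:F) 0 = browF y' ∨ lineF (0:F) 0 = vertF y') := by
    rintro ⟨y', hy', h1 | h1⟩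
    · exact lineF_ne_browF hF3 hy' h1
    · exact lineF_ne_vertF h1
  have h2 : ¬ ∃ m' : F, m' ≠ 0 ∧ ∃ b' : F, lineF (0:F) 0 = lineF m' b' := by
    rintro ⟨m', hm', b', hb'⟩
    exact hm' (lineF_inj hb').1.symm
  rw [colC, dif_neg h, dif_neg h2]

lemma parallel_disjoint {m b b' : F} (hne : b ≠ b') : lineF m b ∩ lineF m b' = ∅ := by
  ext p
  simp only [mem_inter, mem_lineF, notMem_empty, iff_false, not_and]
  intro h1 h2
  exact hne (by linear_combination h2 - h1)

lemma brow_vert_disjoint {y : F} (hy : y ≠ 0) : browF y ∩ vertF y = ∅ := by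
  ext p
  simp only [mem_inter, mem_browF, mem_vertF, notMem_empty, iff_false, not_and]
  rintro (rfl | ⟨h1, h2⟩)
  · exact fun h => hy h.symm
  · exact h2

lemma colorable_EE (hF3 : 3 ≤ Fintype.card F) :
    ColorableWith (EE F) (2 * Fintype.card F - 1) := by
  classical
  set k := Fintype.card F with hk
  have hk3 : 3 ≤ k := hF3
  have hQ : 0 < 2 * k - 1 := by omega
  -- an encoding of F into ℕ with ψ 0 = 0
  have hk0 : 0 < k := by omega
  let e : F ≃ Fin k := Fintype.equivFinOfCardEq hk.symm
  let ψ : F → ℕ := fun t => ((Equiv.swap (e 0) (⟨0, hk0⟩ : Fin k)) (e t) : Fin k).val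
  have hψlt : ∀ t, ψ t < k := fun t => ((Equiv.swap (e 0) (⟨0, hk0⟩ : Fin k)) (e t)).isLt
  have hψinj : ∀ {s t : F}, ψ s = ψ t → s = t := by
    intro s t h
    have := Fin.ext h
    exact e.injective ((Equiv.swap _ _).injective this)
  have hψ0 : ψ 0 = 0 := by
    simp only [ψ, Equiv.swap_apply_left]
  have hψpos : ∀ t : F, t ≠ 0 → 1 ≤ ψ t := by
    intro t ht
    rcases Nat.eq_zero_or_pos (ψ t) with h | h
    · exact absurd (hψinj (h.trans hψ0.symm)) ht
    · exact h
  refine ⟨fun s => ⟨colC ψ s % (2 * k - 1), Nat.mod_lt _ hQ⟩, ?_⟩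
  intro e1 he1 e2 he2 hne hint heq
  have hmodeq : colC ψ e1 % (2 * k - 1) = colC ψ e2 % (2 * k - 1) := congrArg Fin.val heq
  have hval : ∀ s, s ∈ EE F → colC ψ s < 2 * k - 1 := by
    intro s hs
    rw [mem_EE] at hs
    rcases hs with ⟨m, b, hOK, rfl⟩ | ⟨y, hy, rfl⟩ | ⟨a, ha, rfl⟩
    · rcases hOK with ⟨rfl, rfl⟩ | ⟨rfl, rfl⟩ | ⟨hm, -⟩
      · rw [colC_axis hF3]; omega
      · rw [colC_line hF3 ψ one_ne_zero]; have := hψlt 1; omega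
      · rw [colC_line hF3 ψ hm]; have := hψlt m; omega
    · rw [colC_brow ψ hy]; have := hψlt y; omega
    · rw [colC_vert ψ ha]; have := hψlt a; omega
  have hceq : colC ψ e1 = colC ψ e2 := by
    rw [Nat.mod_eq_of_lt (hval _ he1), Nat.mod_eq_of_lt (hval _ he2)] at hmodeq
    exact hmodeq
  clear heq hmodeq
  obtain ⟨p, hp⟩ := hint
  rw [mem_inter] at hp
  rw [mem_EE] at he1 he2
  -- a normalized description: every edge is either a line with m-value (colC = ψ m, and for
  -- m = 0 it is the axis), or brow/vert
  rcases he1 with ⟨m, b, hOK, rfl⟩ | ⟨y, hy, rfl⟩ | ⟨a, ha, rfl⟩ <;>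
    rcases he2 with ⟨m', b', hOK', rfl⟩ | ⟨y', hy', rfl⟩ | ⟨a', ha', rfl⟩
  · -- line vs line
    have hMZ : ∀ m b : F, OKP m b → (m = 0 ∧ b = 0) ∨ m ≠ 0 := by
      rintro m₁ b₁ (⟨rfl, rfl⟩ | ⟨rfl, rfl⟩ | ⟨hm, -⟩)
      · exact Or.inl ⟨rfl, rfl⟩
      · exact Or.inr one_ne_zero
      · exact Or.inr hm
    rcases hMZ m b hOK with ⟨rfl, rfl⟩ | hm <;> rcases hMZ m' b' hOK' with ⟨rfl, rfl⟩ | hm'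
    · exact hne rfl
    · rw [colC_axis hF3, colC_line hF3 ψ hm'] at hceq
      have := hψpos m' hm'
      omega
    · rw [colC_axis hF3, colC_line hF3 ψ hm] at hceq
      have := hψpos m hm
      omega
    · rw [colC_line hF3 ψ hm, colC_line hF3 ψ hm'] at hceq
      have : m = m' := hψinj hceq
      subst this
      have hbb : b ≠ b' := fun h => hne (by rw [h])
      have := parallel_disjoint (m := m) hbb
      rw [← mem_inter] at hp
      rw [this] at hp
      exact notMem_empty p hp
  · -- line vs brow
    exfalso
    have h1 : colC ψ (lineF m b) < k := by
      rcases hOK with ⟨rfl, rfl⟩ | ⟨rfl, rfl⟩ | ⟨hm, -⟩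
      · rw [colC_axis hF3]; omega
      · rw [colC_line hF3 ψ one_ne_zero]; exact hψlt 1
      · rw [colC_line hF3 ψ hm]; exact hψlt m
    rw [colC_brow ψ hy'] at hceq
    have := hψpos y' hy'
    omega
  · exfalso
    have h1 : colC ψ (lineF m b) < k := by
      rcases hOK with ⟨rfl, rfl⟩ | ⟨rfl, rfl⟩ | ⟨hm, -⟩
      · rw [colC_axis hF3]; omega
      · rw [colC_line hF3 ψ one_ne_zero]; exact hψlt 1
      · rw [colC_line hF3 ψ hm]; exact hψlt m
    rw [colC_vert ψ ha'] at hceq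
    have := hψpos a' ha'
    omega
  · exfalso
    have h1 : colC ψ (lineF m' b') < k := by
      rcases hOK' with ⟨rfl, rfl⟩ | ⟨rfl, rfl⟩ | ⟨hm, -⟩
      · rw [colC_axis hF3]; omega
      · rw [colC_line hF3 ψ one_ne_zero]; exact hψlt 1
      · rw [colC_line hF3 ψ hm]; exact hψlt m'
    rw [colC_brow ψ hy] at hceq
    have := hψpos y hy
    omega
  · rw [colC_brow ψ hy, colC_brow ψ hy'] at hceq
    have : y = y' := hψinj (by omega)
    exact hne (by rw [this])
  · rw [colC_brow ψ hy, colC_vert ψ ha'] at hceq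
    have : y = a' := hψinj (by omega)
    subst this
    have := brow_vert_disjoint hy
    rw [← mem_inter] at hp
    rw [this] at hp
    exact notMem_empty p hp
  · exfalso
    have h1 : colC ψ (lineF m' b') < k := by
      rcases hOK' with ⟨rfl, rfl⟩ | ⟨rfl, rfl⟩ | ⟨hm, -⟩
      · rw [colC_axis hF3]; omega
      · rw [colC_line hF3 ψ one_ne_zero]; exact hψlt 1
      · rw [colC_line hF3 ψ hm]; exact hψlt m'
    rw [colC_vert ψ ha] at hceq
    have := hψpos a ha
    omega
  · rw [colC_vert ψ ha, colC_brow ψ hy'] at hceq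
    have : a = y' := hψinj (by omega)
    subst this
    have := brow_vert_disjoint hy'
    rw [← mem_inter] at hp
    rw [inter_comm] at this
    rw [this] at hp
    exact notMem_empty p hp
  · rw [colC_vert ψ ha, colC_vert ψ ha'] at hceq
    have : a = a' := hψinj (by omega)
    exact hne (by rw [this])

lemma lines_meet {m b m' b' : F} (h : m ≠ m') : (lineF m b ∩ lineF m' b').Nonempty := by
  refine ⟨((b' - b) / (m - m'), m * ((b' - b) / (m - m')) + b), ?_⟩
  rw [mem_inter, mem_lineF, mem_lineF]
  refine ⟨rfl, ?_⟩
  have hmm : m - m' ≠ 0 := sub_ne_zero.mpr h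
  field_simp
  ring

lemma line_meets_vert (m b a : F) : (lineF m b ∩ vertF a).Nonempty :=
  ⟨(a, m * a + b), by rw [mem_inter, mem_lineF, mem_vertF]; exact ⟨rfl, rfl⟩⟩

lemma brow_meets_line {m b y : F} (hm : m ≠ 0) (hrow : y ≠ m * y + b) :
    (lineF m b ∩ browF y).Nonempty := by
  refine ⟨((y - b) * m⁻¹, y), ?_⟩
  rw [mem_inter, mem_lineF, mem_browF]
  constructor
  · field_simp; ring
  · refine Or.inr ⟨rfl, ?_⟩
    intro h
    apply hrow
    have h' : (y - b) * m⁻¹ = y := h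
    have : y - b = m * y := by
      calc y - b = m * ((y-b) * m⁻¹) := by field_simp
      _ = m * y := by rw [h']
    linear_combination this

lemma diag_meets_line {m b : F} (hm : m ≠ 1) : (lineF m b ∩ lineF 1 0).Nonempty := by
  refine ⟨(b / (1 - m), b / (1 - m)), ?_⟩
  rw [mem_inter, mem_lineF, mem_lineF]
  have h1 : (1:F) - m ≠ 0 := sub_ne_zero.mpr (fun h => hm h.symm)
  constructor
  · field_simp
    ring
  · rw [one_mul, add_zero]

lemma meets_axis (hF3 : 3 ≤ Fintype.card F) :
    ∀ f ∈ EE F, f ≠ lineF (0:F) 0 → (f ∩ lineF (0:F) 0).Nonempty := by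
  intro f hf hne
  rw [mem_EE] at hf
  rcases hf with ⟨m, b, hOK, rfl⟩ | ⟨y, hy, rfl⟩ | ⟨a, ha, rfl⟩
  · rcases hOK with ⟨rfl, rfl⟩ | ⟨rfl, rfl⟩ | ⟨hm, hb⟩
    · exact absurd rfl hne
    · exact (lines_meet one_ne_zero)
    · exact (lines_meet hm)
  · refine ⟨((0:F), (0:F)), ?_⟩
    rw [mem_inter, mem_browF, mem_lineF]
    exact ⟨Or.inl rfl, by simp⟩
  · refine ⟨(a, 0), ?_⟩
    rw [mem_inter, mem_vertF, mem_lineF]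
    exact ⟨rfl, by simp⟩

lemma zero_mem_browF {y : F} : ((0:F),(0:F)) ∈ browF y := by
  rw [mem_browF]; exact Or.inl rfl

lemma zero_mem_diag : ((0:F),(0:F)) ∈ lineF (1:F) 0 := by
  rw [mem_lineF]; simp

lemma axis_mem_EE : lineF (0:F) 0 ∈ EE F :=
  mem_EE.mpr (Or.inl ⟨0, 0, Or.inl ⟨rfl, rfl⟩, rfl⟩)

lemma diag_mem_EE : lineF (1:F) 0 ∈ EE F :=
  mem_EE.mpr (Or.inl ⟨1, 0, Or.inr (Or.inl ⟨rfl, rfl⟩), rfl⟩)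

lemma brow_mem_EE {y : F} (hy : y ≠ 0) : browF y ∈ EE F :=
  mem_EE.mpr (Or.inr (Or.inl ⟨y, hy, rfl⟩))

lemma lower_EE (hF3 : 3 ≤ Fintype.card F) {q : ℕ} (h : ColorableWith (EE F) q) :
    2 * Fintype.card F - 1 ≤ q := by
  classical
  set k := Fintype.card F with hk
  have hk3 : 3 ≤ k := hF3
  obtain ⟨c, hc⟩ := h
  -- special colors
  have hdax : lineF (0:F) 0 ≠ lineF (1:F) 0 := fun h => one_ne_zero (lineF_inj h).1.symm
  have cad : c (lineF (0:F) 0) ≠ c (lineF (1:F) 0) :=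
    hc _ axis_mem_EE _ diag_mem_EE hdax (lines_meet (F := F) zero_ne_one)
  have cab : ∀ y : F, y ≠ 0 → c (lineF (0:F) 0) ≠ c (browF y) := by
    intro y hy
    exact hc _ axis_mem_EE _ (brow_mem_EE hy) (fun h => lineF_ne_browF hF3 hy h)
      ⟨((0:F),(0:F)), mem_inter.mpr ⟨by simp, zero_mem_browF⟩⟩
  have cdb : ∀ y : F, y ≠ 0 → c (lineF (1:F) 0) ≠ c (browF y) := by
    intro y hy
    exact hc _ diag_mem_EE _ (brow_mem_EE hy) (fun h => lineF_ne_browF hF3 hy h)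
      ⟨((0:F),(0:F)), mem_inter.mpr ⟨zero_mem_diag, zero_mem_browF⟩⟩
  have cbb : ∀ y y' : F, y ≠ 0 → y' ≠ 0 → y ≠ y' → c (browF y) ≠ c (browF y') := by
    intro y y' hy hy' hne
    exact hc _ (brow_mem_EE hy) _ (brow_mem_EE hy') (fun h => hne (browF_inj hy h))
      ⟨((0:F),(0:F)), mem_inter.mpr ⟨zero_mem_browF, zero_mem_browF⟩⟩
  set T : Finset (Fin q) := insert (c (lineF (0:F) 0)) (insert (c (lineF (1:F) 0))
    ((univ.erase (0:F)).image (fun y => c (browF y)))) with hT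
  have himg_inj : Set.InjOn (fun y => c (browF y)) ((univ.erase (0:F) : Finset F) : Set F) := by
    intro y hy y' hy' h
    simp only [coe_erase, Set.mem_diff, Set.mem_singleton_iff] at hy hy'
    by_contra hne
    exact cbb y y' hy.2 hy'.2 hne h
  have hcard_img : ((univ.erase (0:F)).image (fun y => c (browF y))).card = k - 1 := by
    rw [card_image_of_injOn himg_inj, card_erase_of_mem (mem_univ _), card_univ]
  have hTcard : T.card = k + 1 := by
    rw [hT, card_insert_of_notMem, card_insert_of_notMem, hcard_img]
    · omega
    · simp only [mem_image, mem_erase]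
      rintro ⟨y, ⟨hy, -⟩, hcy⟩
      exact cdb y hy hcy.symm
    · simp only [mem_insert, mem_image, mem_erase]
      rintro (h | ⟨y, ⟨hy, -⟩, hcy⟩)
      · exact cad h
      · exact cab y hy hcy.symm
  have hq1 : k + 1 ≤ q := by
    rw [← hTcard]
    calc T.card ≤ (univ : Finset (Fin q)).card := card_le_card (subset_univ T)
    _ = q := by rw [card_univ, Fintype.card_fin]
  -- fiberwise count
  have hsum : (EE F).card = ∑ i ∈ (univ : Finset (Fin q)),
      ((EE F).filter (fun s => c s = i)).card :=
    card_eq_sum_card_fiberwise (fun s _ => mem_univ (c s))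
  -- bounds on class sizes
  have B0 : ((EE F).filter (fun s => c s = c (lineF (0:F) 0))).card ≤ 1 := by
    rw [card_le_one]
    intro f hf g hg
    rw [mem_filter] at hf hg
    have key : ∀ f', f' ∈ EE F → c f' = c (lineF (0:F) 0) → f' = lineF (0:F) 0 := by
      intro f' hf' hcf'
      by_contra hne
      exact hc _ hf' _ axis_mem_EE hne (meets_axis hF3 _ hf' hne) hcf'
    rw [key f hf.1 hf.2, key g hg.1 hg.2]
  have BD : ((EE F).filter (fun s => c s = c (lineF (1:F) 0))).card ≤ k := by
    have hsub : ((EE F).filter (fun s => c s = c (lineF (1:F) 0)))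
        ⊆ univ.image (fun b => lineF (1:F) b) := by
      intro f hf
      rw [mem_filter] at hf
      obtain ⟨hfE, hcf⟩ := hf
      simp only [mem_image, mem_univ, true_and]
      rcases mem_EE.mp hfE with ⟨m, b, hOK, rfl⟩ | ⟨y, hy, rfl⟩ | ⟨a, ha, rfl⟩
      · by_cases hm1 : m = 1
        · exact ⟨b, by rw [hm1]⟩
        · exfalso
          have hne : lineF m b ≠ lineF (1:F) 0 := fun h => hm1 (lineF_inj h).1
          exact hc _ hfE _ diag_mem_EE hne (diag_meets_line hm1) hcf
      · exfalso
        have hne : browF y ≠ lineF (1:F) 0 := fun h => lineF_ne_browF hF3 hy h.symm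
        exact hc _ hfE _ diag_mem_EE hne
          ⟨((0:F),(0:F)), mem_inter.mpr ⟨zero_mem_browF, zero_mem_diag⟩⟩ hcf
      · exfalso
        have hne : vertF a ≠ lineF (1:F) 0 := fun h => lineF_ne_vertF h.symm
        exact hc _ hfE _ diag_mem_EE hne
          ⟨(a, a), mem_inter.mpr ⟨by rw [mem_vertF], by rw [mem_lineF]; simp⟩⟩ hcf
    calc ((EE F).filter (fun s => c s = c (lineF (1:F) 0))).card
        ≤ (univ.image (fun b => lineF (1:F) b)).card := card_le_card hsub
    _ ≤ (univ : Finset F).card := card_image_le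
    _ = k := card_univ
  have BB : ∀ y : F, y ≠ 0 → ((EE F).filter (fun s => c s = c (browF y))).card ≤ 2 := by
    intro y hy
    set S := (EE F).filter (fun s => c s = c (browF y)) with hS
    have hkey : ∀ f ∈ S, f ≠ browF y → (y, y) ∈ f := by
      intro f hf hne
      rw [hS, mem_filter] at hf
      obtain ⟨hfE, hcf⟩ := hf
      have hdisj : ¬ (f ∩ browF y).Nonempty := fun hint =>
        hc _ hfE _ (brow_mem_EE hy) hne hint hcf
      rcases mem_EE.mp hfE with ⟨m, b, hOK, rfl⟩ | ⟨y', hy', rfl⟩ | ⟨a, ha, rfl⟩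
      · rcases hOK with ⟨rfl, rfl⟩ | ⟨rfl, rfl⟩ | ⟨hm, hb⟩
        · exact absurd ⟨((0:F),(0:F)), mem_inter.mpr ⟨by simp, zero_mem_browF⟩⟩ hdisj
        · exact absurd ⟨((0:F),(0:F)), mem_inter.mpr ⟨zero_mem_diag, zero_mem_browF⟩⟩ hdisj
        · rw [mem_lineF]
          by_contra hrow
          exact hdisj (brow_meets_line hm (fun h => hrow h))
      · exfalso
        have hyy : y' ≠ y := fun h => hne (by rw [h])
        exact hdisj ⟨((0:F),(0:F)), mem_inter.mpr ⟨zero_mem_browF, zero_mem_browF⟩⟩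
      · by_cases hay : a = y
        · rw [mem_vertF, hay]
        · exfalso
          apply hdisj
          refine ⟨(a, y), mem_inter.mpr ⟨by rw [mem_vertF], ?_⟩⟩
          rw [mem_browF]
          exact Or.inr ⟨rfl, hay⟩
    have hsub : S ⊆ insert (browF y) (S.filter (fun f => (y,y) ∈ f)) := by
      intro f hf
      rw [mem_insert]
      by_cases hne : f = browF y
      · exact Or.inl hne
      · exact Or.inr (mem_filter.mpr ⟨hf, hkey f hf hne⟩)
    have hone : (S.filter (fun f => (y,y) ∈ f)).card ≤ 1 := by
      rw [card_le_one]
      intro f hf g hg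
      rw [mem_filter, hS, mem_filter] at hf hg
      by_contra hne
      exact hc _ hf.1.1 _ hg.1.1 hne ⟨(y,y), mem_inter.mpr ⟨hf.2, hg.2⟩⟩
        (hf.1.2.trans hg.1.2.symm)
    calc S.card ≤ (insert (browF y) (S.filter (fun f => (y,y) ∈ f))).card := card_le_card hsub
    _ ≤ (S.filter (fun f => (y,y) ∈ f)).card + 1 := card_insert_le _ _
    _ ≤ 2 := by omega
  have Brest : ∀ i : Fin q, i ∉ T → ((EE F).filter (fun s => c s = i)).card ≤ k - 1 := by
    intro i hi
    set S := (EE F).filter (fun s => c s = i) with hS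
    have hiT : i ≠ c (lineF (0:F) 0) ∧ i ≠ c (lineF (1:F) 0) ∧
        ∀ y : F, y ≠ 0 → i ≠ c (browF y) := by
      rw [hT] at hi
      simp only [mem_insert, mem_image, mem_erase, not_or, not_exists] at hi
      refine ⟨hi.1, hi.2.1, fun y hy h => ?_⟩
      exact hi.2.2 y ⟨⟨hy, mem_univ y⟩, h.symm⟩
    -- every member is a line with m ≠ 0, b ≠ 0, or a vert
    have hmem : ∀ f ∈ S, (∃ m b : F, m ≠ 0 ∧ b ≠ 0 ∧ f = lineF m b) ∨ (∃ a : F, a ≠ 0 ∧ f = vertF a) := by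
      intro f hf
      rw [hS, mem_filter] at hf
      obtain ⟨hfE, hcf⟩ := hf
      rcases mem_EE.mp hfE with ⟨m, b, hOK, rfl⟩ | ⟨y, hy, rfl⟩ | ⟨a, ha, rfl⟩
      · rcases hOK with ⟨rfl, rfl⟩ | ⟨rfl, rfl⟩ | ⟨hm, hb⟩
        · exact absurd hcf.symm hiT.1
        · exact absurd hcf.symm hiT.2.1
        · exact Or.inl ⟨m, b, hm, hb, rfl⟩
      · exact absurd hcf.symm (hiT.2.2 y hy)
      · exact Or.inr ⟨a, ha, rfl⟩
    -- distinct members are disjoint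
    have hdisj : ∀ f ∈ S, ∀ g ∈ S, f ≠ g → ¬ (f ∩ g).Nonempty := by
      intro f hf g hg hne hint
      rw [hS, mem_filter] at hf hg
      exact hc _ hf.1 _ hg.1 hne hint (hf.2.trans hg.2.symm)
    rcases S.eq_empty_or_nonempty with hSe | ⟨f₀, hf₀⟩
    · rw [hSe, card_empty]; omega
    rcases hmem f₀ hf₀ with ⟨m₀, b₀, hm₀, hb₀, rfl⟩ | ⟨a₀, ha₀, rfl⟩
    · -- all members are lines with slope m₀
      have hsub : S ⊆ (univ.erase (0:F)).image (fun b => lineF m₀ b) := by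
        intro f hf
        rcases hmem f hf with ⟨m, b, hm, hb, rfl⟩ | ⟨a, ha, rfl⟩
        · simp only [mem_image, mem_erase, mem_univ, and_true]
          refine ⟨b, hb, ?_⟩
          by_cases hmm : m = m₀
          · rw [hmm]
          · exfalso
            have hne : lineF m b ≠ lineF m₀ b₀ := fun h => hmm (lineF_inj h).1
            exact hdisj _ hf _ hf₀ hne (lines_meet hmm)
        · exfalso
          have hne : lineF m₀ b₀ ≠ vertF a := lineF_ne_vertF
          exact hdisj _ hf₀ _ hf hne (line_meets_vert m₀ b₀ a)
      calc S.card ≤ ((univ.erase (0:F)).image (fun b => lineF m₀ b)).card := card_le_card hsub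
      _ ≤ (univ.erase (0:F)).card := card_image_le
      _ = k - 1 := by rw [card_erase_of_mem (mem_univ _), card_univ]
    · -- all members are verts
      have hsub : S ⊆ (univ.erase (0:F)).image vertF := by
        intro f hf
        rcases hmem f hf with ⟨m, b, hm, hb, rfl⟩ | ⟨a, ha, rfl⟩
        · exfalso
          exact hdisj _ hf _ hf₀ lineF_ne_vertF (line_meets_vert m b a₀)
        · simp only [mem_image, mem_erase, mem_univ, and_true]
          exact ⟨a, ha, rfl⟩
      calc S.card ≤ ((univ.erase (0:F)).image vertF).card := card_le_card hsub
      _ ≤ (univ.erase (0:F)).card := card_image_le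
      _ = k - 1 := by rw [card_erase_of_mem (mem_univ _), card_univ]
  -- assemble
  have hsplit : ∑ i ∈ (univ : Finset (Fin q)), ((EE F).filter (fun s => c s = i)).card
      = ∑ i ∈ (univ \ T), ((EE F).filter (fun s => c s = i)).card
        + ∑ i ∈ T, ((EE F).filter (fun s => c s = i)).card :=
    (Finset.sum_sdiff (subset_univ T)).symm
  have hsumT : ∑ i ∈ T, ((EE F).filter (fun s => c s = i)).card ≤ 3 * k - 1 := by
    rw [hT]
    rw [Finset.sum_insert, Finset.sum_insert]
    · have himgsum : ∑ i ∈ ((univ.erase (0:F)).image (fun y => c (browF y))),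
          ((EE F).filter (fun s => c s = i)).card ≤ (k - 1) * 2 := by
        calc ∑ i ∈ ((univ.erase (0:F)).image (fun y => c (browF y))),
            ((EE F).filter (fun s => c s = i)).card
            ≤ ((univ.erase (0:F)).image (fun y => c (browF y))).card * 2 := by
              apply Finset.sum_le_card_nsmul
              intro i hi
              simp only [mem_image, mem_erase] at hi
              obtain ⟨y, ⟨hy, -⟩, rfl⟩ := hi
              exact BB y hy
        _ = (k - 1) * 2 := by rw [hcard_img]
      have := B0
      have := BD
      omega
    · simp only [mem_image, mem_erase]
      rintro ⟨y, ⟨hy, -⟩, hcy⟩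
      exact cdb y hy hcy.symm
    · simp only [mem_insert, mem_image, mem_erase]
      rintro (h | ⟨y, ⟨hy, -⟩, hcy⟩)
      · exact cad h
      · exact cab y hy hcy.symm
  have hsumRest : ∑ i ∈ (univ \ T), ((EE F).filter (fun s => c s = i)).card
      ≤ (q - (k+1)) * (k - 1) := by
    calc ∑ i ∈ (univ \ T), ((EE F).filter (fun s => c s = i)).card
        ≤ (univ \ T).card * (k - 1) := by
          apply Finset.sum_le_card_nsmul
          intro i hi
          exact Brest i (mem_sdiff.mp hi).2
    _ = (q - (k+1)) * (k - 1) := by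
        rw [card_sdiff_of_subset (subset_univ T), hTcard, card_univ, Fintype.card_fin]
  have hEcard := card_EE (F := F) hF3
  rw [← hk] at hEcard
  have hfinal : k ^ 2 + 1 ≤ (q - (k+1)) * (k - 1) + (3 * k - 1) := by
    rw [← hEcard, hsum, hsplit]
    omega
  -- conclude
  by_contra hcon
  push_neg at hcon
  obtain ⟨t, ht⟩ : ∃ t, k = t + 3 := ⟨k - 3, by omega⟩
  have e1 : k - 1 = t + 2 := by omega
  have e2 : 3 * k - 1 = 3 * t + 8 := by omega
  have e3 : q - (k + 1) ≤ t := by omega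
  have e4 : (q - (k+1)) * (k-1) ≤ t * (t + 2) := by
    rw [e1]; exact Nat.mul_le_mul_right _ e3
  have e7 : t * (t + 2) = t * t + 2 * t := by ring
  have e8 : (q - (k+1)) * (k-1) + (3 * k - 1) ≤ t * t + 2 * t + (3 * t + 8) := by
    rw [← e7, ← e2]; exact Nat.add_le_add e4 (le_refl _)
  have e9 := le_trans hfinal e8
  have e5 : k ^ 2 = t * t + 6 * t + 9 := by rw [ht]; ring
  rw [e5] at e9
  linarith

lemma card_edges (hF3 : 3 ≤ Fintype.card F) :
    ∀ e ∈ EE F, e.card = Fintype.card F := by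
  intro e he
  rcases mem_EE.mp he with ⟨m, b, -, rfl⟩ | ⟨y, hy, rfl⟩ | ⟨a, -, rfl⟩
  · exact card_lineF m b
  · exact card_browF hy
  · exact card_vertF a

lemma chromIndex_EE (hF3 : 3 ≤ Fintype.card F) :
    chromIndex (EE F) = 2 * Fintype.card F - 1 := by
  apply le_antisymm
  · exact Nat.sInf_le (colorable_EE hF3)
  · exact le_csInf ⟨_, colorable_EE hF3⟩ (fun b hb => lower_EE hF3 hb)

end Construction

section Transport
variable {V W : Type} [DecidableEq V] [DecidableEq W]

lemma map_map_symm (φ : V ≃ W) (s : Finset V) :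
    (s.map φ.toEmbedding).map φ.symm.toEmbedding = s := by
  ext a
  simp only [mem_map, Equiv.coe_toEmbedding]
  constructor
  · rintro ⟨c, hc, rfl⟩
    obtain ⟨b, hb, rfl⟩ := hc
    rwa [Equiv.symm_apply_apply]
  · intro ha
    exact ⟨φ a, ⟨a, ha, rfl⟩, φ.symm_apply_apply a⟩

lemma colorable_map_iff (φ : V ≃ W) (E : Finset (Finset V)) (q : ℕ) :
    ColorableWith (E.map (Finset.mapEmbedding φ.toEmbedding).toEmbedding) q
      ↔ ColorableWith E q := by
  constructor
  · rintro ⟨c, hc⟩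
    refine ⟨fun s => c (s.map φ.toEmbedding), ?_⟩
    intro e he f hf hne hint
    have he' : e.map φ.toEmbedding ∈ E.map (Finset.mapEmbedding φ.toEmbedding).toEmbedding :=
      mem_map_of_mem _ he
    have hf' : f.map φ.toEmbedding ∈ E.map (Finset.mapEmbedding φ.toEmbedding).toEmbedding :=
      mem_map_of_mem _ hf
    apply hc _ he' _ hf'
    · intro h
      exact hne (Finset.map_injective φ.toEmbedding h)
    · obtain ⟨p, hp⟩ := hint
      rw [mem_inter] at hp
      exact ⟨φ p, mem_inter.mpr ⟨mem_map_of_mem _ hp.1, mem_map_of_mem _ hp.2⟩⟩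
  · rintro ⟨c, hc⟩
    refine ⟨fun s => c (s.map φ.symm.toEmbedding), ?_⟩
    intro e' he' f' hf' hne hint
    obtain ⟨e, he, rfl⟩ := Finset.mem_map.mp he'
    obtain ⟨f, hf, rfl⟩ := Finset.mem_map.mp hf'
    have emap : ∀ s : Finset V, (Finset.mapEmbedding φ.toEmbedding).toEmbedding s
        = s.map φ.toEmbedding := fun s => rfl
    rw [emap, emap] at hne hint
    show c ((e.map φ.toEmbedding).map φ.symm.toEmbedding)
        ≠ c ((f.map φ.toEmbedding).map φ.symm.toEmbedding)
    rw [map_map_symm, map_map_symm]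
    apply hc _ he _ hf
    · intro h; exact hne (by rw [h])
    · obtain ⟨p, hp⟩ := hint
      rw [mem_inter, Finset.mem_map, Finset.mem_map] at hp
      obtain ⟨⟨u, hu, hup⟩, ⟨v, hv, hvp⟩⟩ := hp
      have huv : u = v := φ.injective ((show φ u = p from hup).trans (show φ v = p from hvp).symm)
      exact ⟨u, mem_inter.mpr ⟨hu, huv ▸ hv⟩⟩

lemma hyperDeg_map (φ : V ≃ W) (E : Finset (Finset V)) (x : V) :
    hyperDeg (E.map (Finset.mapEmbedding φ.toEmbedding).toEmbedding) (φ x) = hyperDeg E x := by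
  rw [hyperDeg, hyperDeg]
  have hset : (E.map (Finset.mapEmbedding φ.toEmbedding).toEmbedding).filter
      (fun e => φ x ∈ e) = (E.filter (fun e => x ∈ e)).map
        (Finset.mapEmbedding φ.toEmbedding).toEmbedding := by
    ext s'
    simp only [mem_filter, Finset.mem_map, Finset.mapEmbedding_apply]
    constructor
    · rintro ⟨⟨s, hs, rfl⟩, hx⟩
      refine ⟨s, ⟨hs, ?_⟩, rfl⟩
      obtain ⟨u, hu, hux⟩ := Finset.mem_map.mp hx
      rwa [← φ.injective (show φ u = φ x from hux)]
    · rintro ⟨s, ⟨hs, hx⟩, rfl⟩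
      exact ⟨⟨s, hs, rfl⟩, mem_map_of_mem _ hx⟩
  rw [hset, Finset.card_map]

end Transport

theorem exists_good_E (F : Type) [Field F] [Fintype F] [DecidableEq F] (k : ℕ)
    (hcard : Fintype.card F = k) (hk : 3 ≤ k) :
    ∃ E : Finset (Finset (Fin (k ^ 2))),
      Linear E ∧ (∀ e ∈ E, e.card = k) ∧ E.card = k ^ 2 + 1 ∧
      (∃ e₀ ∈ E, (∀ x ∈ e₀, hyperDeg E x = k + 1) ∧
        ∀ x : Fin (k ^ 2), x ∉ e₀ → k ≤ hyperDeg E x) ∧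
      chromIndex E = 2 * k - 1 := by
  classical
  have hF3 : 3 ≤ Fintype.card F := by rw [hcard]; exact hk
  have hc2 : Fintype.card (F × F) = k ^ 2 := by
    rw [Fintype.card_prod, hcard]; ring
  let φ : (F × F) ≃ Fin (k ^ 2) := Fintype.equivFinOfCardEq hc2
  have emap : ∀ s : Finset (F × F), (Finset.mapEmbedding φ.toEmbedding).toEmbedding s
      = s.map φ.toEmbedding := fun s => rfl
  refine ⟨(EE F).map (Finset.mapEmbedding φ.toEmbedding).toEmbedding, ?_, ?_, ?_, ?_, ?_⟩
  · -- Linear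
    intro e' he' f' hf' hne
    obtain ⟨e, he, rfl⟩ := Finset.mem_map.mp he'
    obtain ⟨f, hf, rfl⟩ := Finset.mem_map.mp hf'
    rw [emap e, emap f] at hne
    rw [emap e, emap f, ← Finset.map_inter, Finset.card_map]
    exact linear_EE hF3 e he f hf (fun h => hne (by rw [h]))
  · -- uniform
    intro e' he'
    obtain ⟨e, he, rfl⟩ := Finset.mem_map.mp he'
    rw [emap, Finset.card_map, card_edges hF3 e he, hcard]
  · -- card
    rw [Finset.card_map, card_EE hF3, hcard]
  · -- degrees
    refine ⟨(lineF (0:F) 0).map φ.toEmbedding, ?_, ?_, ?_⟩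
    · rw [Finset.mem_map]
      exact ⟨lineF 0 0, axis_mem_EE, (emap _).symm ▸ rfl⟩
    · intro x' hx'
      obtain ⟨x, hx, rfl⟩ := Finset.mem_map.mp hx'
      rw [show φ.toEmbedding x = φ x from rfl, hyperDeg_map φ, degEE_e0 hF3 hx, hcard]
    · intro x' hx'
      have hx'' : x' = φ (φ.symm x') := (φ.apply_symm_apply x').symm
      have hx : φ.symm x' ∉ lineF (0:F) 0 := by
        intro hmem
        apply hx'
        rw [hx'']
        exact mem_map_of_mem _ hmem
      rw [hx'', hyperDeg_map φ, degEE_off hF3 hx, hcard]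
  · -- chromatic index
    have hset : {q | ColorableWith ((EE F).map (Finset.mapEmbedding φ.toEmbedding).toEmbedding) q}
        = {q | ColorableWith (EE F) q} := by
      ext q
      exact colorable_map_iff φ (EE F) q
    rw [chromIndex, hset, ← chromIndex, chromIndex_EE hF3, hcard]

theorem stmt16 (k : ℕ) (hk : 3 ≤ k)
    (hpp : ∃ p m : ℕ, p.Prime ∧ 1 ≤ m ∧ k = p ^ m) :
    ∃ E : Finset (Finset (Fin (k ^ 2))),
      Linear E ∧ (∀ e ∈ E, e.card = k) ∧ E.card = k ^ 2 + 1 ∧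
      (∃ e₀ ∈ E, (∀ x ∈ e₀, hyperDeg E x = k + 1) ∧
        ∀ x : Fin (k ^ 2), x ∉ e₀ → k ≤ hyperDeg E x) ∧
      chromIndex E = 2 * k - 1 := by
  obtain ⟨p, m, hp, hm, hkpm⟩ := hpp
  haveI : Fact p.Prime := ⟨hp⟩
  letI : Fintype (GaloisField p m) := Fintype.ofFinite _
  letI : DecidableEq (GaloisField p m) := Classical.decEq _
  have hcard : Fintype.card (GaloisField p m) = k := by
    have h := GaloisField.card p m (by omega)
    rw [Nat.card_eq_fintype_card] at h
    rw [h, hkpm]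
  exact exists_good_E (GaloisField p m) k hcard hk
end

section
/- Let k ≥ 2 and let H = (V,E) be a finite k-uniform linear hypergraph with n = |V| vertices satisfying n ≤ k² + k − 2. Then the chromatic index of H satisfies q(H) ≤ Δ([H]_2) + 1. -/
open Finset

variable {V : Type*}

section Aux
variable [Fintype V] [DecidableEq V]

lemma colorable_mono' {E : Finset (Finset V)} {q q' : ℕ} (h : q ≤ q') :
    ColorableWith E q → ColorableWith E q' := by
  rintro ⟨c, hc⟩
  exact ⟨fun f => Fin.castLE h (c f), fun e he f hf hne hint heq =>
    hc e he f hf hne hint (Fin.castLE_injective h heq)⟩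

lemma maxDeg2_mono' {E E' : Finset (Finset V)} (h : E' ⊆ E) : maxDeg2 E' ≤ maxDeg2 E := by
  apply Finset.sup_mono_fun
  intro x _
  apply Finset.card_le_card
  apply Finset.monotone_filter_right
  rintro y - ⟨hy1, e, he, hxe, hye⟩
  exact ⟨hy1, e, h he, hxe, hye⟩

lemma inter_eq_singleton' {E : Finset (Finset V)} (hlin : Linear E)
    {a b : Finset V} (ha : a ∈ E) (hb : b ∈ E) (hab : a ≠ b) {x : V}
    (hxa : x ∈ a) (hxb : x ∈ b) : a ∩ b = {x} := by
  apply Finset.eq_singleton_iff_unique_mem.mpr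
  refine ⟨Finset.mem_inter.mpr ⟨hxa, hxb⟩, fun y hy => ?_⟩
  exact Finset.card_le_one.mp (hlin a ha b hb hab) y hy x (Finset.mem_inter.mpr ⟨hxa, hxb⟩)

lemma card_B' {k : ℕ} {E : Finset (Finset V)} (hlin : Linear E)
    (huni : ∀ e ∈ E, e.card = k) (x : V) :
    ((E.filter fun a => x ∈ a).biUnion fun a => a.erase x).card = hyperDeg E x * (k - 1) := by
  rw [Finset.card_biUnion]
  · rw [Finset.sum_congr rfl (fun a ha => ?_), Finset.sum_const, smul_eq_mul]
    · rfl
    · have ha' := Finset.mem_filter.mp ha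
      rw [Finset.card_erase_of_mem ha'.2, huni a ha'.1]
  · intro a ha b hb hab
    have ha' := Finset.mem_filter.mp ha
    have hb' := Finset.mem_filter.mp hb
    have hab' : a ∩ b = {x} := inter_eq_singleton' hlin ha'.1 hb'.1 hab ha'.2 hb'.2
    show Disjoint (a.erase x) (b.erase x)
    rw [Finset.disjoint_left]
    intro y hy hy'
    have h1 := Finset.mem_erase.mp hy
    have h2 := Finset.mem_erase.mp hy'
    have : y ∈ a ∩ b := Finset.mem_inter.mpr ⟨h1.2, h2.2⟩
    rw [hab'] at this
    exact h1.1 (Finset.mem_singleton.mp this)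

lemma not_mem_B' {E : Finset (Finset V)} (x : V) :
    x ∉ ((E.filter fun a => x ∈ a).biUnion fun a => a.erase x) := by
  simp

lemma deg2_eq' {k : ℕ} {E : Finset (Finset V)} (hlin : Linear E)
    (huni : ∀ e ∈ E, e.card = k) (x : V) :
    deg2 E x = hyperDeg E x * (k - 1) := by
  rw [← card_B' hlin huni x]
  unfold deg2
  congr 1
  ext y
  simp only [Finset.mem_filter, Finset.mem_univ, true_and, Finset.mem_biUnion,
    Finset.mem_erase]
  constructor
  · rintro ⟨hy, e, he, hxe, hye⟩
    exact ⟨e, ⟨he, hxe⟩, hy, hye⟩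
  · rintro ⟨a, ⟨haE, hxa⟩, hy, hya⟩
    exact ⟨hy, a, haE, hxa, hya⟩

lemma deg_le' {k : ℕ} {E : Finset (Finset V)} (hk : 2 ≤ k) (hlin : Linear E)
    (huni : ∀ e ∈ E, e.card = k) (hle : Fintype.card V ≤ k ^ 2 + k - 2) (x : V) :
    hyperDeg E x ≤ k + 1 := by
  obtain ⟨j, rfl⟩ : ∃ j, k = j + 2 := ⟨k - 2, by omega⟩
  have hB := card_B' hlin huni x
  have h1 : (insert x ((E.filter fun a => x ∈ a).biUnion fun a => a.erase x)).card
      ≤ Fintype.card V := Finset.card_le_univ _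
  rw [Finset.card_insert_of_notMem (not_mem_B' x), hB] at h1
  have e2 : j + 2 - 1 = j + 1 := by omega
  rw [e2] at h1
  have hp : (j + 2) ^ 2 = j * j + 4 * j + 4 := by ring
  rw [hp] at hle
  by_contra h
  push_neg at h
  have h2 : (j + 4) * (j + 1) ≤ hyperDeg E x * (j + 1) :=
    Nat.mul_le_mul_right _ (by omega)
  have h3 : (j + 4) * (j + 1) = j * j + 5 * j + 4 := by ring
  omega

lemma edgeDeg_le_sum' {E : Finset (Finset V)} {e : Finset V} (he : e ∈ E) :
    edgeDeg E e ≤ ∑ x ∈ e, (hyperDeg E x - 1) := by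
  have hsub : E.filter (fun a => a ≠ e ∧ (a ∩ e).Nonempty) ⊆
      e.biUnion (fun x => (E.filter fun a => x ∈ a).erase e) := by
    intro a ha
    obtain ⟨haE, hane, y, hy⟩ := Finset.mem_filter.mp ha
    obtain ⟨hya, hye⟩ := Finset.mem_inter.mp hy
    exact Finset.mem_biUnion.mpr ⟨y, hye,
      Finset.mem_erase.mpr ⟨hane, Finset.mem_filter.mpr ⟨haE, hya⟩⟩⟩
  calc edgeDeg E e ≤ (e.biUnion (fun x => (E.filter fun a => x ∈ a).erase e)).card :=
        Finset.card_le_card hsub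
    _ ≤ ∑ x ∈ e, ((E.filter fun a => x ∈ a).erase e).card := Finset.card_biUnion_le
    _ = ∑ x ∈ e, (hyperDeg E x - 1) := Finset.sum_congr rfl fun x hx => by
        rw [Finset.card_erase_of_mem (Finset.mem_filter.mpr ⟨he, hx⟩)]; rfl



end Aux
section Design
variable [Fintype V] [DecidableEq V]

lemma design_colorable' {k q : ℕ} (hk : 2 ≤ k) (hq : k + 1 ≤ q)
    (E : Finset (Finset V)) (hlin : Linear E) (huni : ∀ e ∈ E, e.card = k)
    (hreg : ∀ e ∈ E, ∀ x ∈ e, hyperDeg E x = k + 1)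
    (hstar : ∀ p w : V, (∃ a ∈ E, p ∈ a) → (∃ a ∈ E, w ∈ a) →
      w = p ∨ ∃ a ∈ E, p ∈ a ∧ w ∈ a) :
    ColorableWith E q := by
  classical
  have hq0 : 0 < q := by omega
  rcases E.eq_empty_or_nonempty with rfl | ⟨e₁, he₁⟩
  · exact ⟨fun _ => ⟨0, hq0⟩, by simp⟩
  obtain ⟨x₀, hx₀⟩ : e₁.Nonempty := by
    rw [← Finset.card_pos, huni e₁ he₁]; omega
  set T := E.filter (fun a => x₀ ∈ a) with hTdef
  have hT : T.card = k + 1 := hreg e₁ he₁ x₀ hx₀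
  -- parallel existence
  have hpar : ∀ f ∈ E, x₀ ∉ f → ∃ h ∈ T, h ∩ f = ∅ := by
    intro f hf hx₀f
    set T' := T.filter (fun h => (h ∩ f).Nonempty) with hT'
    have hT'card : T'.card ≤ k := by
      have hinj : T'.card ≤ f.card := by
        apply Finset.card_le_card_of_injOn
          (fun h => if hh : (h ∩ f).Nonempty then hh.choose else x₀)
        · intro h hh
          have hne : (h ∩ f).Nonempty := (Finset.mem_filter.mp hh).2
          dsimp only
          rw [dif_pos hne]
          exact (Finset.mem_inter.mp hne.choose_spec).2
        · intro a ha b hb hab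
          have ha' : a ∈ T' := ha
          have hb' : b ∈ T' := hb
          by_contra hne
          have hA : (a ∩ f).Nonempty := (Finset.mem_filter.mp ha').2
          have hB : (b ∩ f).Nonempty := (Finset.mem_filter.mp hb').2
          have hab2 : (if hh : (a ∩ f).Nonempty then hh.choose else x₀) =
              (if hh : (b ∩ f).Nonempty then hh.choose else x₀) := hab
          rw [dif_pos hA, dif_pos hB] at hab2
          have hab := hab2
          have haT := Finset.mem_filter.mp (Finset.mem_filter.mp ha').1
          have hbT := Finset.mem_filter.mp (Finset.mem_filter.mp hb').1
          have hsing : a ∩ b = {x₀} :=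
            inter_eq_singleton' hlin haT.1 hbT.1 hne haT.2 hbT.2
          have h1 := hA.choose_spec
          have h2 := hB.choose_spec
          rw [hab] at h1
          have : hB.choose ∈ a ∩ b := Finset.mem_inter.mpr
            ⟨(Finset.mem_inter.mp h1).1, (Finset.mem_inter.mp h2).1⟩
          rw [hsing, Finset.mem_singleton] at this
          rw [this] at h2
          exact hx₀f (Finset.mem_inter.mp h2).2
      rwa [huni f hf] at hinj
    have hnsub : ¬ (T ⊆ T') := fun hsub => by
      have := Finset.card_le_card hsub; omega
    obtain ⟨h, hhT, hhT'⟩ := Finset.not_subset.mp hnsub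
    refine ⟨h, hhT, ?_⟩
    rw [← Finset.not_nonempty_iff_eq_empty]
    exact fun hne => hhT' (Finset.mem_filter.mpr ⟨hhT, hne⟩)
  -- key uniqueness of parallels through a point
  have hkey : ∀ (p : V) (h : Finset V), h ∈ E → p ∉ h →
      ∀ f ∈ E, ∀ g ∈ E, p ∈ f → p ∈ g → h ∩ f = ∅ → h ∩ g = ∅ → f = g := by
    intro p h hhE hph f hfE g hgE hpf hpg hhf hhg
    by_contra hne
    set S := E.filter (fun a => p ∈ a) with hS
    have hScard : S.card = k + 1 := hreg f hfE p hpf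
    set M := S.filter (fun a => (a ∩ h).Nonempty) with hM
    have hMk : k ≤ M.card := by
      have hinj : h.card ≤ M.card := by
        apply Finset.card_le_card_of_injOn
          (fun w => if hw : ∃ a ∈ E, p ∈ a ∧ w ∈ a then hw.choose else f)
        · intro w hwh
          have hw : ∃ a ∈ E, p ∈ a ∧ w ∈ a := by
            rcases hstar p w ⟨f, hfE, hpf⟩ ⟨h, hhE, hwh⟩ with rfl | hex
            · exact absurd hwh hph
            · exact hex
          dsimp only
          rw [dif_pos hw]
          obtain ⟨haE, hpa, hwa⟩ := hw.choose_spec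
          exact Finset.mem_filter.mpr ⟨Finset.mem_filter.mpr ⟨haE, hpa⟩,
            ⟨w, Finset.mem_inter.mpr ⟨hwa, hwh⟩⟩⟩
        · intro w hw w' hw' heq
          have hwh : w ∈ h := hw
          have hwh' : w' ∈ h := hw'
          by_contra hne'
          have h1 : ∃ a ∈ E, p ∈ a ∧ w ∈ a := by
            rcases hstar p w ⟨f, hfE, hpf⟩ ⟨h, hhE, hwh⟩ with rfl | hex
            · exact absurd hwh hph
            · exact hex
          have h2 : ∃ a ∈ E, p ∈ a ∧ w' ∈ a := by
            rcases hstar p w' ⟨f, hfE, hpf⟩ ⟨h, hhE, hwh'⟩ with rfl | hex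
            · exact absurd hwh' hph
            · exact hex
          have heq2 : (if hw : ∃ a ∈ E, p ∈ a ∧ w ∈ a then hw.choose else f) =
              (if hw : ∃ a ∈ E, p ∈ a ∧ w' ∈ a then hw.choose else f) := heq
          rw [dif_pos h1, dif_pos h2] at heq2
          obtain ⟨haE, hpa, hwa⟩ := h1.choose_spec
          obtain ⟨haE', hpa', hwa'⟩ := h2.choose_spec
          rw [heq2] at hwa
          have hah : h2.choose ≠ h := fun hEq => hph (hEq ▸ hpa')
          have hcle := hlin h2.choose haE' h hhE hah
          exact hne' (Finset.card_le_one.mp hcle w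
            (Finset.mem_inter.mpr ⟨hwa, hwh⟩) w'
            (Finset.mem_inter.mpr ⟨hwa', hwh'⟩))
      rwa [huni h hhE] at hinj
    have hfS : f ∈ S := Finset.mem_filter.mpr ⟨hfE, hpf⟩
    have hgS : g ∈ S := Finset.mem_filter.mpr ⟨hgE, hpg⟩
    have hfM : f ∉ M := by
      intro hm
      obtain ⟨y, hy⟩ := (Finset.mem_filter.mp hm).2
      have : y ∈ h ∩ f := Finset.mem_inter.mpr
        ⟨(Finset.mem_inter.mp hy).2, (Finset.mem_inter.mp hy).1⟩
      rw [hhf] at this; exact absurd this (Finset.notMem_empty y)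
    have hgM : g ∉ M := by
      intro hm
      obtain ⟨y, hy⟩ := (Finset.mem_filter.mp hm).2
      have : y ∈ h ∩ g := Finset.mem_inter.mpr
        ⟨(Finset.mem_inter.mp hy).2, (Finset.mem_inter.mp hy).1⟩
      rw [hhg] at this; exact absurd this (Finset.notMem_empty y)
    have hsub : insert f (insert g M) ⊆ S := by
      intro a ha
      rcases Finset.mem_insert.mp ha with rfl | ha
      · exact hfS
      rcases Finset.mem_insert.mp ha with rfl | ha
      · exact hgS
      · exact Finset.filter_subset _ _ ha
    have hcard2 : M.card + 2 ≤ S.card := by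
      have h1 : (insert f (insert g M)).card = M.card + 2 := by
        rw [Finset.card_insert_of_notMem (by simp [hne, hfM]),
          Finset.card_insert_of_notMem hgM]
      rw [← h1]
      exact Finset.card_le_card hsub
    omega
  -- the coloring by parallel classes
  have hx₀T : ∀ f, x₀ ∈ f → f ∈ E → f ∈ T := fun f hx hf => Finset.mem_filter.mpr ⟨hf, hx⟩
  set c₀ : Finset V → Finset V := fun f =>
    if hx : x₀ ∈ f then f else if hf : f ∈ E then (hpar f hf hx).choose else e₁
    with hc₀
  have hc₀self : ∀ f, x₀ ∈ f → c₀ f = f := fun f hx => by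
    simp only [hc₀, dif_pos hx]
  have hc₀T : ∀ f ∈ E, c₀ f ∈ T := by
    intro f hf
    by_cases hx : x₀ ∈ f
    · rw [hc₀self f hx]; exact hx₀T f hx hf
    · simp only [hc₀, dif_neg hx, dif_pos hf]
      exact (hpar f hf hx).choose_spec.1
  have hc₀par : ∀ f ∈ E, x₀ ∉ f → (c₀ f) ∩ f = ∅ := by
    intro f hf hx
    simp only [hc₀, dif_neg hx, dif_pos hf]
    exact (hpar f hf hx).choose_spec.2
  have hproper : ∀ f ∈ E, ∀ g ∈ E, f ≠ g → (f ∩ g).Nonempty → c₀ f ≠ c₀ g := by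
    intro f hf g hg hne hint heq
    by_cases hxf : x₀ ∈ f <;> by_cases hxg : x₀ ∈ g
    · rw [hc₀self f hxf, hc₀self g hxg] at heq; exact hne heq
    · rw [hc₀self f hxf] at heq
      have h0 := hc₀par g hg hxg
      rw [← heq] at h0
      obtain ⟨y, hy⟩ := hint
      have : y ∈ f ∩ g := hy
      rw [h0] at this
      exact absurd this (Finset.notMem_empty y)
    · rw [hc₀self g hxg] at heq
      have h0 := hc₀par f hf hxf
      rw [heq] at h0
      obtain ⟨y, hy⟩ := hint
      have : y ∈ g ∩ f := Finset.mem_inter.mpr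
        ⟨(Finset.mem_inter.mp hy).2, (Finset.mem_inter.mp hy).1⟩
      rw [h0] at this
      exact absurd this (Finset.notMem_empty y)
    · obtain ⟨p, hp⟩ := hint
      obtain ⟨hpf, hpg⟩ := Finset.mem_inter.mp hp
      have hhf : (c₀ f) ∩ f = ∅ := hc₀par f hf hxf
      have hhg : (c₀ f) ∩ g = ∅ := by rw [heq]; exact hc₀par g hg hxg
      have hhE : c₀ f ∈ E := (Finset.mem_filter.mp (hc₀T f hf)).1
      have hpnh : p ∉ c₀ f := by
        intro hph
        have : p ∈ (c₀ f) ∩ f := Finset.mem_inter.mpr ⟨hph, hpf⟩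
        rw [hhf] at this
        exact absurd this (Finset.notMem_empty p)
      exact hne (hkey p (c₀ f) hhE hpnh f hf g hg hpf hpg hhf hhg)
  have hTq : T.card ≤ q := by omega
  refine ⟨fun f => if hf : c₀ f ∈ T then Fin.castLE hTq (T.equivFin ⟨c₀ f, hf⟩)
    else ⟨0, hq0⟩, ?_⟩
  intro f hf g hg hne hint heq
  have h1 : c₀ f ∈ T := hc₀T f hf
  have h2 : c₀ g ∈ T := hc₀T g hg
  have heq2 : (if hf : c₀ f ∈ T then Fin.castLE hTq (T.equivFin ⟨c₀ f, hf⟩)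
      else ⟨0, hq0⟩) = (if hf : c₀ g ∈ T then Fin.castLE hTq (T.equivFin ⟨c₀ g, hf⟩)
      else ⟨0, hq0⟩) := heq
  rw [dif_pos h1, dif_pos h2] at heq2
  have h3 := Fin.castLE_injective hTq heq2
  have h4 := T.equivFin.injective h3
  exact hproper f hf g hg hne hint (congrArg Subtype.val h4)

end Design
section Main
variable [Fintype V] [DecidableEq V]

lemma main_colorable {k : ℕ} (hk : 2 ≤ k)
    (hle : Fintype.card V ≤ k ^ 2 + k - 2) :
    ∀ E : Finset (Finset V), Linear E → (∀ e ∈ E, e.card = k) →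
      ColorableWith E (maxDeg2 E + 1) := by
  intro E
  induction E using Finset.strongInductionOn with
  | _ E ih =>
  intro hlin huni
  rcases E.eq_empty_or_nonempty with rfl | ⟨e₁, he₁⟩
  · exact ⟨fun _ => ⟨0, Nat.succ_pos _⟩, by simp⟩
  by_cases hgood : ∃ e ∈ E, edgeDeg E e ≤ maxDeg2 E
  · obtain ⟨e, he, hde⟩ := hgood
    set E' := E.erase e with hE'
    have hsub : E' ⊆ E := Finset.erase_subset _ _
    have hlin' : Linear E' := fun a ha b hb hab => hlin a (hsub ha) b (hsub hb) hab
    have huni' : ∀ a ∈ E', a.card = k := fun a ha => huni a (hsub ha)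
    have hcol' := ih E' (Finset.erase_ssubset he) hlin' huni'
    have hcol2 : ColorableWith E' (maxDeg2 E + 1) :=
      colorable_mono' (by have := maxDeg2_mono' hsub; omega) hcol'
    obtain ⟨c', hc'⟩ := hcol2
    set A := E'.filter (fun a => (a ∩ e).Nonempty) with hA
    have hAcard : A.card ≤ maxDeg2 E := by
      refine le_trans (le_trans (Finset.card_le_card ?_) (le_refl (edgeDeg E e))) hde
      intro a ha
      obtain ⟨ha1, ha2⟩ := Finset.mem_filter.mp ha
      obtain ⟨hane, haE⟩ := Finset.mem_erase.mp ha1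
      exact Finset.mem_filter.mpr ⟨haE, hane, ha2⟩
    have hfree : ∃ col : Fin (maxDeg2 E + 1), col ∉ A.image c' := by
      by_contra hcon
      push_neg at hcon
      have h1 : (Finset.univ : Finset (Fin (maxDeg2 E + 1))) ⊆ A.image c' :=
        fun col _ => hcon col
      have h2 := Finset.card_le_card h1
      have h3 := Finset.card_image_le (s := A) (f := c')
      rw [Finset.card_univ, Fintype.card_fin] at h2
      omega
    obtain ⟨col, hcol⟩ := hfree
    refine ⟨fun f => if f = e then col else c' f, ?_⟩
    intro f hf g hg hfg hint
    beta_reduce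
    by_cases hfe : f = e <;> by_cases hge : g = e
    · exact absurd (hfe.trans hge.symm) hfg
    · subst hfe
      rw [if_pos rfl, if_neg hge]
      intro heq
      apply hcol
      rw [heq]
      apply Finset.mem_image_of_mem c'
      apply Finset.mem_filter.mpr
      refine ⟨Finset.mem_erase.mpr ⟨hge, hg⟩, ?_⟩
      obtain ⟨y, hy⟩ := hint
      obtain ⟨h1, h2⟩ := Finset.mem_inter.mp hy
      exact ⟨y, Finset.mem_inter.mpr ⟨h2, h1⟩⟩
    · subst hge
      rw [if_neg hfe, if_pos rfl]
      intro heq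
      apply hcol
      rw [← heq]
      exact Finset.mem_image_of_mem c' (Finset.mem_filter.mpr
        ⟨Finset.mem_erase.mpr ⟨hfe, hf⟩, hint⟩)
    · rw [if_neg hfe, if_neg hge]
      exact hc' f (Finset.mem_erase.mpr ⟨hfe, hf⟩) g (Finset.mem_erase.mpr ⟨hge, hg⟩) hfg hint
  · push_neg at hgood
    obtain ⟨j, rfl⟩ : ∃ j, k = j + 2 := ⟨k - 2, by omega⟩
    have hsub1 : j + 2 - 1 = j + 1 := by omega
    have hub : ∀ x : V, hyperDeg E x ≤ j + 3 := fun x => deg_le' hk hlin huni hle x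
    have hdeg2 : ∀ x : V, deg2 E x = hyperDeg E x * (j + 1) := by
      intro x; rw [deg2_eq' hlin huni x, hsub1]
    have hreg : ∀ e ∈ E, ∀ x ∈ e, hyperDeg E x = j + 3 := by
      intro e he x hx
      have hec : e.card = j + 2 := huni e he
      have hene : e.Nonempty := by rw [← Finset.card_pos, hec]; omega
      obtain ⟨z, hz, hzmax⟩ := Finset.exists_max_image e (hyperDeg E) hene
      have h1 : edgeDeg E e ≤ ∑ y ∈ e, (hyperDeg E y - 1) := edgeDeg_le_sum' he
      have h2 : ∑ y ∈ e, (hyperDeg E y - 1) ≤ (j + 2) * (hyperDeg E z - 1) := by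
        calc ∑ y ∈ e, (hyperDeg E y - 1) ≤ ∑ y ∈ e, (hyperDeg E z - 1) :=
              Finset.sum_le_sum (fun y hy => Nat.sub_le_sub_right (hzmax y hy) 1)
          _ = (j + 2) * (hyperDeg E z - 1) := by
              rw [Finset.sum_const, hec, smul_eq_mul]
      have h3 : deg2 E z ≤ maxDeg2 E := Finset.le_sup (Finset.mem_univ z)
      have h4 : maxDeg2 E < edgeDeg E e := hgood e he
      have hz1 : 1 ≤ hyperDeg E z :=
        Finset.card_pos.mpr ⟨e, Finset.mem_filter.mpr ⟨he, hz⟩⟩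
      have hzk : hyperDeg E z = j + 3 := by
        obtain ⟨δ, hδ⟩ : ∃ δ, hyperDeg E z = δ + 1 := ⟨hyperDeg E z - 1, by omega⟩
        have h5 : hyperDeg E z * (j + 1) < (j + 2) * (hyperDeg E z - 1) := by
          have := hdeg2 z
          omega
        rw [hδ] at h5 ⊢
        have e1 : (δ + 1) * (j + 1) = δ * j + δ + j + 1 := by ring
        have e2 : (j + 2) * (δ + 1 - 1) = δ * j + 2 * δ := by
          have hcc : δ + 1 - 1 = δ := by omega
          rw [hcc]; ring
        have hubz := hub z
        rw [hδ] at hubz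
        omega
      have h6 : (j + 3) * (j + 1) + 1 ≤ ∑ y ∈ e, (hyperDeg E y - 1) := by
        have hdz := hdeg2 z
        rw [hzk] at hdz
        omega
      by_contra hxne
      have hxlt : hyperDeg E x - 1 < j + 2 := by
        have := hub x
        have hx1 : 1 ≤ hyperDeg E x :=
          Finset.card_pos.mpr ⟨e, Finset.mem_filter.mpr ⟨he, hx⟩⟩
        omega
      have h7 : ∑ y ∈ e, (hyperDeg E y - 1) < ∑ y ∈ e, (j + 2) :=
        Finset.sum_lt_sum (fun y hy => by have := hub y; omega) ⟨x, hx, hxlt⟩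
      rw [Finset.sum_const, hec, smul_eq_mul] at h7
      have e3 : (j + 3) * (j + 1) + 1 = (j + 2) * (j + 2) := by ring
      omega
    set S := Finset.univ.filter (fun x => 0 < hyperDeg E x) with hSdef
    have hSmem : ∀ x, x ∈ S ↔ ∃ a ∈ E, x ∈ a := by
      intro x
      rw [hSdef, Finset.mem_filter]
      constructor
      · rintro ⟨-, hpos⟩
        obtain ⟨a, ha⟩ := Finset.card_pos.mp hpos
        exact ⟨a, (Finset.mem_filter.mp ha).1, (Finset.mem_filter.mp ha).2⟩
      · rintro ⟨a, haE, hxa⟩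
        exact ⟨Finset.mem_univ x, Finset.card_pos.mpr
          ⟨a, Finset.mem_filter.mpr ⟨haE, hxa⟩⟩⟩
    have hSreg : ∀ x ∈ S, hyperDeg E x = j + 3 := by
      intro x hx
      obtain ⟨a, haE, hxa⟩ := (hSmem x).mp hx
      exact hreg a haE x hxa
    have hsum1 : ∑ x ∈ Finset.univ, hyperDeg E x = E.card * (j + 2) := by
      calc ∑ x ∈ Finset.univ, hyperDeg E x
          = ∑ x ∈ Finset.univ, (E.filter fun e => x ∈ e).card := rfl
        _ = ∑ x ∈ Finset.univ, ∑ e ∈ E, (if x ∈ e then 1 else 0) := by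
            refine Finset.sum_congr rfl fun x _ => ?_
            rw [Finset.card_filter]
        _ = ∑ e ∈ E, ∑ x ∈ Finset.univ, (if x ∈ e then 1 else 0) := Finset.sum_comm
        _ = ∑ e ∈ E, e.card := by
            refine Finset.sum_congr rfl fun e _ => ?_
            simp
        _ = ∑ e ∈ E, (j + 2) := Finset.sum_congr rfl huni
        _ = E.card * (j + 2) := by rw [Finset.sum_const, smul_eq_mul]
    have hsum2 : ∑ x ∈ Finset.univ, hyperDeg E x = S.card * (j + 3) := by
      rw [← Finset.sum_filter_add_sum_filter_not Finset.univ
        (fun x => 0 < hyperDeg E x) (hyperDeg E)]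
      have hz0 : ∑ x ∈ Finset.univ.filter (fun x => ¬ 0 < hyperDeg E x),
          hyperDeg E x = 0 :=
        Finset.sum_eq_zero (fun x hx => by
          have := (Finset.mem_filter.mp hx).2; omega)
      rw [hz0, add_zero]
      calc ∑ x ∈ S, hyperDeg E x = ∑ x ∈ S, (j + 3) := Finset.sum_congr rfl hSreg
        _ = S.card * (j + 3) := by rw [Finset.sum_const, smul_eq_mul]
    have hdvd : (j + 2) ∣ S.card := by
      have hco : Nat.Coprime (j + 2) (j + 3) := by
        have h33 : j + 3 = (j + 2) + 1 := rfl
        rw [h33]; simp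
      exact hco.dvd_of_dvd_mul_right
        ⟨E.card, by rw [← hsum2, hsum1, Nat.mul_comm]⟩
    obtain ⟨x₀, hx₀⟩ : e₁.Nonempty := by rw [← Finset.card_pos, huni e₁ he₁]; omega
    have hstar_card : ∀ p, (∃ a ∈ E, p ∈ a) →
        (insert p ((E.filter fun a => p ∈ a).biUnion fun a => a.erase p)).card
          = (j + 2) * (j + 2) := by
      intro p hp
      obtain ⟨a, haE, hpa⟩ := hp
      rw [Finset.card_insert_of_notMem (not_mem_B' p), card_B' hlin huni p,
        hreg a haE p hpa, hsub1]
      ring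
    have hstar_sub : ∀ p, (∃ a ∈ E, p ∈ a) →
        (insert p ((E.filter fun a => p ∈ a).biUnion fun a => a.erase p)) ⊆ S := by
      intro p hp y hy
      rcases Finset.mem_insert.mp hy with rfl | hy
      · exact (hSmem y).mpr hp
      · obtain ⟨a, ha, hya⟩ := Finset.mem_biUnion.mp hy
        exact (hSmem y).mpr ⟨a, (Finset.mem_filter.mp ha).1,
          Finset.mem_of_mem_erase hya⟩
    have hScard_ge : (j + 2) * (j + 2) ≤ S.card := by
      rw [← hstar_card x₀ ⟨e₁, he₁, hx₀⟩]
      exact Finset.card_le_card (hstar_sub x₀ ⟨e₁, he₁, hx₀⟩)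
    have hScard_le : S.card ≤ j * j + 5 * j + 4 := by
      have h1 : S.card ≤ Fintype.card V := Finset.card_le_univ S
      have hp2 : (j + 2) ^ 2 = j * j + 4 * j + 4 := by ring
      omega
    have hScard : S.card = (j + 2) * (j + 2) := by
      obtain ⟨m, hm⟩ := hdvd
      have h1 : (j + 2) * (j + 2) ≤ (j + 2) * m := by rw [← hm]; exact hScard_ge
      have h2 : j + 2 ≤ m := Nat.le_of_mul_le_mul_left h1 (by omega)
      have e5 : (j + 2) * (j + 2) = j * j + 4 * j + 4 := by ring
      have h3 : (j + 2) * m < (j + 2) * (j + 3) := by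
        have e4 : (j + 2) * (j + 3) = j * j + 5 * j + 6 := by ring
        omega
      have h4 : m < j + 3 := Nat.lt_of_mul_lt_mul_left h3
      have hm2 : m = j + 2 := by omega
      rw [hm, hm2]
    have hstar : ∀ p w : V, (∃ a ∈ E, p ∈ a) → (∃ a ∈ E, w ∈ a) →
        w = p ∨ ∃ a ∈ E, p ∈ a ∧ w ∈ a := by
      intro p w hp hw
      have heqS : insert p ((E.filter fun a => p ∈ a).biUnion fun a => a.erase p) = S :=
        Finset.eq_of_subset_of_card_le (hstar_sub p hp)
          (by rw [hstar_card p hp, hScard])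
      have hwS : w ∈ S := (hSmem w).mpr hw
      rw [← heqS] at hwS
      rcases Finset.mem_insert.mp hwS with rfl | hwB
      · exact Or.inl rfl
      · obtain ⟨a, ha, hwa⟩ := Finset.mem_biUnion.mp hwB
        exact Or.inr ⟨a, (Finset.mem_filter.mp ha).1,
          (Finset.mem_filter.mp ha).2, Finset.mem_of_mem_erase hwa⟩
    have hmax_ge : (j + 3) * (j + 1) ≤ maxDeg2 E := by
      have h1 : deg2 E x₀ ≤ maxDeg2 E := Finset.le_sup (Finset.mem_univ x₀)
      rw [hdeg2 x₀, hreg e₁ he₁ x₀ hx₀] at h1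
      exact h1
    have hqq : (j + 2) + 1 ≤ maxDeg2 E + 1 := by
      have e6 : (j + 3) * (j + 1) = j * j + 4 * j + 3 := by ring
      omega
    exact design_colorable' hk hqq E hlin huni hreg hstar

end Main


theorem stmt18 {V : Type*} [Fintype V] [DecidableEq V] (k : ℕ) (hk : 2 ≤ k)
    (E : Finset (Finset V)) (n : ℕ) (hn : n = Fintype.card V)
    (hlin : Linear E) (huni : ∀ e ∈ E, e.card = k)
    (hle : n ≤ k ^ 2 + k - 2) :
    chromIndex E ≤ maxDeg2 E + 1 := by
  have hle' : Fintype.card V ≤ k ^ 2 + k - 2 := hn ▸ hle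
  exact Nat.sInf_le (main_colorable hk hle' E hlin huni)
end

section
/- Let H = (V,E) be a finite linear hypergraph with n = |V| vertices in which every hyperedge has at least 2 vertices, and suppose E can be partitioned as E = E' ⊔ E'' such that: (i) every hyperedge e ∈ E' has |e| ≥ √n (i.e. |e|² ≥ n); (ii) every hyperedge e ∈ E'' has |e| < √n (i.e. |e|² < n); (iii) every hyperedge e ∈ E'' contains a vertex x₀ with deg_H(x₀) ≤ |e|, where deg_H is the degree in the whole hypergraph H. Then the chromatic index of H satisfies q(H) ≤ Δ([H]_2) + 1. -/
open Finset

variable {V : Type*}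

section Aux
variable [Fintype V] [DecidableEq V]
set_option linter.unusedSectionVars false

/-- Edges meeting `e`, other than `e`, of size at least that of `e`. -/
def Tset (E : Finset (Finset V)) (e : Finset V) : Finset (Finset V) :=
  E.filter fun g => g ≠ e ∧ (g ∩ e).Nonempty ∧ e.card ≤ g.card

/-- Edges through `x`, other than `e`, of size at least that of `e`. -/
def Kset (E : Finset (Finset V)) (e : Finset V) (x : V) : Finset (Finset V) :=
  E.filter fun g => x ∈ g ∧ g ≠ e ∧ e.card ≤ g.card

lemma two_le_inter_card {e f : Finset V} {x y : V} (hx : x ∈ e) (hx' : x ∈ f)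
    (hy : y ∈ e) (hy' : y ∈ f) (hxy : x ≠ y) : 2 ≤ (e ∩ f).card := by
  have h : ({x, y} : Finset V) ⊆ e ∩ f := by
    intro z hz
    simp only [mem_insert, mem_singleton] at hz
    rcases hz with rfl | rfl <;> simp [mem_inter, *]
  calc 2 = ({x, y} : Finset V).card := (Finset.card_pair hxy).symm
    _ ≤ _ := Finset.card_le_card h

lemma sum_card_le_deg2 {E : Finset (Finset V)} (hlin : Linear E) (x : V)
    {G : Finset (Finset V)} (hGE : G ⊆ E) (hx : ∀ f ∈ G, x ∈ f) :
    ∑ f ∈ G, (f.card - 1) ≤ deg2 E x := by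
  have hdisj : ∀ a ∈ G, ∀ b ∈ G, a ≠ b → Disjoint (a.erase x) (b.erase x) := by
    intro a ha b hb hab
    rw [Finset.disjoint_left]
    intro y hy hy'
    have h2 := two_le_inter_card (hx a ha) (hx b hb) (Finset.mem_of_mem_erase hy)
      (Finset.mem_of_mem_erase hy') (Ne.symm (Finset.ne_of_mem_erase hy))
    have := hlin a (hGE ha) b (hGE hb) hab
    omega
  have hcard : (G.biUnion fun f => f.erase x).card = ∑ f ∈ G, (f.card - 1) := by
    rw [Finset.card_biUnion hdisj]
    refine Finset.sum_congr rfl fun f hf => ?_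
    rw [Finset.card_erase_of_mem (hx f hf)]
  rw [← hcard]
  apply Finset.card_le_card
  intro y hy
  simp only [Finset.mem_biUnion] at hy
  obtain ⟨f, hf, hyf⟩ := hy
  simp only [deg2, Finset.mem_filter, Finset.mem_univ, true_and]
  exact ⟨Finset.ne_of_mem_erase hyf, f, hGE hf, hx f hf, Finset.mem_of_mem_erase hyf⟩

lemma Tset_card_eq {E : Finset (Finset V)} (hlin : Linear E) {e : Finset V} (he : e ∈ E) :
    (Tset E e).card = ∑ x ∈ e, (Kset E e x).card := by
  have : Tset E e = e.biUnion fun x => Kset E e x := by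
    ext g
    simp only [Tset, Kset, Finset.mem_filter, Finset.mem_biUnion]
    constructor
    · rintro ⟨hgE, hge, ⟨y, hy⟩, hcard⟩
      rw [Finset.mem_inter] at hy
      exact ⟨y, hy.2, hgE, hy.1, hge, hcard⟩
    · rintro ⟨x, hxe, hgE, hxg, hge, hcard⟩
      exact ⟨hgE, hge, ⟨x, Finset.mem_inter.2 ⟨hxg, hxe⟩⟩, hcard⟩
  rw [this]
  apply Finset.card_biUnion
  intro x hx y hy hxy
  show Disjoint (Kset E e x) (Kset E e y)
  rw [Finset.disjoint_left]
  intro g hg hg'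
  simp only [Kset, Finset.mem_filter] at hg hg'
  have h2 := two_le_inter_card hg.2.1 hx hg'.2.1 hy hxy
  rw [Finset.inter_comm] at h2
  have := hlin e he g hg.1 (Ne.symm hg.2.2.1)
  omega

lemma deg2_le_maxDeg2 (E : Finset (Finset V)) (x : V) : deg2 E x ≤ maxDeg2 E :=
  Finset.le_sup (Finset.mem_univ x)

lemma deg2_le_n (E : Finset (Finset V)) (x : V) : deg2 E x ≤ Fintype.card V - 1 := by
  have h : (Finset.univ.filter fun y => y ≠ x ∧ ∃ e ∈ E, x ∈ e ∧ y ∈ e) ⊆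
      Finset.univ.erase x := by
    intro y hy
    simp only [Finset.mem_filter] at hy
    exact Finset.mem_erase.2 ⟨hy.2.1, Finset.mem_univ y⟩
  calc deg2 E x ≤ (Finset.univ.erase x).card := Finset.card_le_card h
    _ = Fintype.card V - 1 := by rw [Finset.card_erase_of_mem (Finset.mem_univ x), Finset.card_univ]

lemma maxDeg2_le_n (E : Finset (Finset V)) : maxDeg2 E ≤ Fintype.card V - 1 :=
  Finset.sup_le fun x _ => deg2_le_n E x

lemma Kset_bound {E : Finset (Finset V)} (hlin : Linear E) {e : Finset V} (he : e ∈ E)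
    {x : V} (hx : x ∈ e) :
    ((Kset E e x).card + 1) * (e.card - 1) ≤ deg2 E x := by
  have hnm : e ∉ Kset E e x := by simp [Kset]
  have hsub : insert e (Kset E e x) ⊆ E := by
    intro g hg
    rcases Finset.mem_insert.1 hg with rfl | hg
    · exact he
    · exact (Finset.mem_filter.1 hg).1
  have hmem : ∀ f ∈ insert e (Kset E e x), x ∈ f := by
    intro f hf
    rcases Finset.mem_insert.1 hf with rfl | hf
    · exact hx
    · exact (Finset.mem_filter.1 hf).2.1
  have h1 := sum_card_le_deg2 hlin x hsub hmem
  rw [Finset.sum_insert hnm] at h1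
  have h2 : (Kset E e x).card * (e.card - 1) ≤ ∑ f ∈ Kset E e x, (f.card - 1) := by
    have := Finset.card_nsmul_le_sum (Kset E e x) (fun f => f.card - 1) (e.card - 1)
      (fun f hf => by
        have h := (Finset.mem_filter.1 hf).2.2.2
        show e.card - 1 ≤ f.card - 1
        omega)
    simpa using this
  have h3 : ((Kset E e x).card + 1) * (e.card - 1)
      = (Kset E e x).card * (e.card - 1) + (e.card - 1) := by ring
  omega

lemma small_edge_bound {E : Finset (Finset V)} (hlin : Linear E)
    {e : Finset V} (he : e ∈ E) (hd : 2 ≤ e.card)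
    {x₀ : V} (hx₀ : x₀ ∈ e) (hdeg : hyperDeg E x₀ ≤ e.card) :
    (Tset E e).card ≤ maxDeg2 E := by
  set D := maxDeg2 E with hD
  set d := e.card with hdd
  -- bound on K x₀
  have hK0 : (Kset E e x₀).card ≤ d - 1 := by
    have hsub : Kset E e x₀ ⊆ (E.filter fun g => x₀ ∈ g).erase e := by
      intro g hg
      simp only [Kset, Finset.mem_filter] at hg
      exact Finset.mem_erase.2 ⟨hg.2.2.1, Finset.mem_filter.2 ⟨hg.1, hg.2.1⟩⟩
    have hce : e ∈ E.filter fun g => x₀ ∈ g := Finset.mem_filter.2 ⟨he, hx₀⟩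
    have := Finset.card_le_card hsub
    rw [Finset.card_erase_of_mem hce] at this
    have : (Kset E e x₀).card ≤ hyperDeg E x₀ - 1 := this
    omega
  have hDd : d - 1 ≤ D := by
    have h1 := sum_card_le_deg2 hlin x₀ (G := {e}) (by simpa using he) (by simpa using hx₀)
    have h2 := deg2_le_maxDeg2 E x₀
    simp at h1
    omega
  have hd1 : 0 < d - 1 := by omega
  -- bound on other K x
  have hKx : ∀ x ∈ e.erase x₀, (Kset E e x).card ≤ D / (d - 1) - 1 := by
    intro x hx
    have hxe := Finset.mem_of_mem_erase hx
    have h1 := Kset_bound hlin he hxe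
    have h2 := deg2_le_maxDeg2 E x
    have h3 : ((Kset E e x).card + 1) * (d - 1) ≤ D := le_trans h1 h2
    have h4 : (Kset E e x).card + 1 ≤ D / (d - 1) := (Nat.le_div_iff_mul_le hd1).2 h3
    omega
  have hm1 : 1 ≤ D / (d - 1) := by
    rw [Nat.le_div_iff_mul_le hd1]; omega
  rw [Tset_card_eq hlin he]
  rw [← Finset.add_sum_erase e _ hx₀]
  have hsum : ∑ x ∈ e.erase x₀, (Kset E e x).card ≤ (d - 1) * (D / (d - 1) - 1) := by
    have := Finset.sum_le_card_nsmul (e.erase x₀) (fun x => (Kset E e x).card)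
      (D / (d - 1) - 1) hKx
    rw [Finset.card_erase_of_mem hx₀] at this
    simpa [mul_comm] using this
  have hfin : (d - 1) + (d - 1) * (D / (d - 1) - 1) ≤ D := by
    have h5 : (d - 1) + (d - 1) * (D / (d - 1) - 1) = (d - 1) * (D / (d - 1)) := by
      have : D / (d-1) - 1 + 1 = D / (d-1) := by omega
      calc (d - 1) + (d - 1) * (D / (d - 1) - 1)
          = (d - 1) * ((D / (d - 1) - 1) + 1) := by ring
        _ = (d - 1) * (D / (d - 1)) := by rw [this]
    rw [h5, mul_comm]
    exact Nat.div_mul_le_self D (d - 1)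
  omega

lemma bad_structure {E : Finset (Finset V)} (hlin : Linear E)
    (hloop : ∀ f ∈ E, 2 ≤ f.card) {e : Finset V} (he : e ∈ E)
    (hn2 : Fintype.card V ≤ e.card ^ 2)
    (hbad : maxDeg2 E + 1 ≤ (Tset E e).card) :
    maxDeg2 E = e.card ^ 2 - 1 ∧ Fintype.card V = e.card ^ 2 ∧
    (∀ x ∈ e, (∀ g ∈ E, x ∈ g → g.card = e.card) ∧
      (Kset E e x).card = e.card ∧
      (∀ y : V, y ≠ x → ∃ f ∈ E, x ∈ f ∧ y ∈ f)) := by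
  set D := maxDeg2 E with hD
  obtain ⟨m, hm⟩ : ∃ m, e.card = m + 2 := ⟨e.card - 2, by have := hloop e he; omega⟩
  have hd1 : e.card - 1 = m + 1 := by omega
  have hTsum := Tset_card_eq hlin he
  -- sum of per-vertex bounds
  have hKb : ∀ x ∈ e, ((Kset E e x).card + 1) * (m + 1) ≤ D := by
    intro x hx
    have h1 := Kset_bound hlin he hx
    rw [hd1] at h1
    exact le_trans h1 (deg2_le_maxDeg2 E x)
  have hsum1 : ((Tset E e).card + e.card) * (m + 1) ≤ e.card * D := by
    have h2 : ∑ x ∈ e, ((Kset E e x).card + 1) * (m + 1) ≤ e.card * D := by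
      have := Finset.sum_le_card_nsmul e (fun x => ((Kset E e x).card + 1) * (m + 1)) D hKb
      simpa [mul_comm] using this
    calc ((Tset E e).card + e.card) * (m + 1)
        = (∑ x ∈ e, ((Kset E e x).card + 1)) * (m + 1) := by
          rw [Finset.sum_add_distrib, Finset.sum_const, hTsum]; simp [mul_comm]
      _ = ∑ x ∈ e, ((Kset E e x).card + 1) * (m + 1) := by rw [Finset.sum_mul]
      _ ≤ e.card * D := h2
  have hDlow : m * m + 4 * m + 3 ≤ D := by
    have h3 : (D + 1 + (m + 2)) * (m + 1) ≤ (m + 2) * D := by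
      calc (D + 1 + (m + 2)) * (m + 1) ≤ ((Tset E e).card + (m+2)) * (m + 1) :=
            mul_le_mul_left (by omega) (m + 1)
        _ = ((Tset E e).card + e.card) * (m + 1) := by rw [hm]
        _ ≤ e.card * D := hsum1
        _ = (m + 2) * D := by rw [hm]
    have e1 : (D + 1 + (m + 2)) * (m + 1) = D * m + D + (m + 3) * (m + 1) := by ring
    have e2 : (m + 2) * D = D * m + 2 * D := by ring
    have e3 : (m + 3) * (m + 1) = m * m + 4 * m + 3 := by ring
    omega
  have hsq : e.card ^ 2 = m * m + 4 * m + 4 := by rw [hm]; ring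
  have hDn := maxDeg2_le_n E
  have hen : e.card ≤ Fintype.card V := Finset.card_le_univ e
  have hDeq : D = e.card ^ 2 - 1 := by omega
  have hneq : Fintype.card V = e.card ^ 2 := by omega
  refine ⟨hDeq, hneq, ?_⟩
  -- all K-cards equal m+2
  have hKle : ∀ x ∈ e, (Kset E e x).card ≤ m + 2 := by
    intro x hx
    have := hKb x hx
    have hfac : (m + 3) * (m + 1) = D := by
      rw [hDeq, hsq]
      have e3 : (m + 3) * (m + 1) = m * m + 4 * m + 3 := by ring
      omega
    rw [← hfac] at this
    have := Nat.le_of_mul_le_mul_right this (by omega : 0 < m + 1)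
    omega
  have hKeq : ∀ x ∈ e, (Kset E e x).card = m + 2 := by
    intro x hx
    by_contra hne
    have hxlt : (Kset E e x).card ≤ m + 1 := by
      have := hKle x hx; omega
    have hrest : ∑ y ∈ e.erase x, (Kset E e y).card ≤ (m + 1) * (m + 2) := by
      have := Finset.sum_le_card_nsmul (e.erase x) (fun y => (Kset E e y).card) (m + 2)
        (fun y hy => hKle y (Finset.mem_of_mem_erase hy))
      rw [Finset.card_erase_of_mem hx, hm] at this
      simpa [mul_comm] using this
    have hsplit : (Tset E e).card = (Kset E e x).card + ∑ y ∈ e.erase x, (Kset E e y).card := by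
      rw [hTsum, ← Finset.add_sum_erase e _ hx]
    have : (Tset E e).card ≤ m + 1 + (m + 1) * (m + 2) := by omega
    have hcontra : D + 1 ≤ m + 1 + (m + 1) * (m + 2) := by omega
    rw [hDeq, hsq] at hcontra
    have e4 : (m + 1) * (m + 2) = m * m + 3 * m + 2 := by ring
    omega
  -- per-vertex full structure
  intro x hx
  have hKx := hKeq x hx
  -- deg2 x and sum over Kset are exactly determined
  have hins : ∀ f ∈ insert e (Kset E e x), x ∈ f := by
    intro f hf
    rcases Finset.mem_insert.1 hf with rfl | hf
    · exact hx
    · exact (Finset.mem_filter.1 hf).2.1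
  have hinsE : insert e (Kset E e x) ⊆ E := by
    intro g hg
    rcases Finset.mem_insert.1 hg with rfl | hg
    · exact he
    · exact (Finset.mem_filter.1 hg).1
  have henK : e ∉ Kset E e x := by simp [Kset]
  have hsumK_le : (m + 1) + ∑ f ∈ Kset E e x, (f.card - 1) ≤ D := by
    have h1 := sum_card_le_deg2 hlin x hinsE hins
    rw [Finset.sum_insert henK, hd1] at h1
    exact le_trans h1 (deg2_le_maxDeg2 E x)
  have hsumK_ge : (m + 2) * (m + 1) ≤ ∑ f ∈ Kset E e x, (f.card - 1) := by
    have := Finset.card_nsmul_le_sum (Kset E e x) (fun f => f.card - 1) (m + 1)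
      (fun f hf => by
        have := (Finset.mem_filter.1 hf).2.2.2
        show m + 1 ≤ f.card - 1
        omega)
    rw [hKx] at this
    simpa using this
  have hDval : (m + 1) + (m + 2) * (m + 1) = D := by
    rw [hDeq, hsq]
    have e5 : (m + 2) * (m + 1) = m * m + 3 * m + 2 := by ring
    omega
  -- each member of Kset has card exactly e.card
  have hKcard : ∀ f ∈ Kset E e x, f.card = e.card := by
    intro f hf
    have hge : e.card ≤ f.card := (Finset.mem_filter.1 hf).2.2.2
    by_contra hne
    have hfge : m + 2 ≤ f.card - 1 := by omega
    have : ∑ g ∈ Kset E e x, (g.card - 1)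
        = (f.card - 1) + ∑ g ∈ (Kset E e x).erase f, (g.card - 1) := by
      rw [← Finset.add_sum_erase _ _ hf]
    have hrest2 : (m + 1) * (m + 1) ≤ ∑ g ∈ (Kset E e x).erase f, (g.card - 1) := by
      have := Finset.card_nsmul_le_sum ((Kset E e x).erase f) (fun g => g.card - 1) (m + 1)
        (fun g hg => by
          have := (Finset.mem_filter.1 (Finset.mem_of_mem_erase hg)).2.2.2
          show m + 1 ≤ g.card - 1
          omega)
      rw [Finset.card_erase_of_mem hf, hKx] at this
      simpa using this
    have e6 : (m + 1) * (m + 1) = m * m + 2 * m + 1 := by ring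
    have e7 : (m + 2) * (m + 1) = m * m + 3 * m + 2 := by ring
    have hDv : D = m * m + 4 * m + 3 := by rw [hDeq, hsq]; omega
    omega
  -- no other edges through x
  have hother : ∀ g ∈ E, x ∈ g → g = e ∨ g ∈ Kset E e x := by
    intro g hg hxg
    by_contra hcon
    push_neg at hcon
    obtain ⟨hge, hgK⟩ := hcon
    have hgsmall : 1 ≤ g.card - 1 := by have := hloop g hg; omega
    have hGsub : insert g (insert e (Kset E e x)) ⊆ E := by
      intro a ha
      rcases Finset.mem_insert.1 ha with rfl | ha
      · exact hg
      · exact hinsE ha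
    have hGmem : ∀ f ∈ insert g (insert e (Kset E e x)), x ∈ f := by
      intro f hf
      rcases Finset.mem_insert.1 hf with rfl | hf
      · exact hxg
      · exact hins f hf
    have hgnotin : g ∉ insert e (Kset E e x) := by
      simp only [Finset.mem_insert]
      push_neg
      exact ⟨hge, hgK⟩
    have h1 := sum_card_le_deg2 hlin x hGsub hGmem
    rw [Finset.sum_insert hgnotin, Finset.sum_insert henK, hd1] at h1
    have h2 := deg2_le_maxDeg2 E x
    omega
  refine ⟨?_, by rw [hKx, hm], ?_⟩
  · intro g hg hxg
    rcases hother g hg hxg with rfl | hgK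
    · rfl
    · exact hKcard g hgK
  -- coverage
  · have hdeg2 : deg2 E x = D := by
      have h1 := sum_card_le_deg2 hlin x hinsE hins
      rw [Finset.sum_insert henK, hd1] at h1
      have h2 := deg2_le_maxDeg2 E x
      omega
    intro y hyx
    have hcardeq : (Finset.univ.filter fun z => z ≠ x ∧ ∃ f ∈ E, x ∈ f ∧ z ∈ f).card
        = (Finset.univ.erase x).card := by
      have : deg2 E x = D := hdeg2
      rw [Finset.card_erase_of_mem (Finset.mem_univ x), Finset.card_univ]
      calc (Finset.univ.filter fun z => z ≠ x ∧ ∃ f ∈ E, x ∈ f ∧ z ∈ f).card = D := hdeg2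
        _ = Fintype.card V - 1 := by omega
    have hsub2 : (Finset.univ.filter fun z => z ≠ x ∧ ∃ f ∈ E, x ∈ f ∧ z ∈ f) ⊆
        Finset.univ.erase x := by
      intro z hz
      simp only [Finset.mem_filter] at hz
      exact Finset.mem_erase.2 ⟨hz.2.1, Finset.mem_univ z⟩
    have heq2 := Finset.eq_of_subset_of_card_le hsub2 (le_of_eq hcardeq.symm)
    have hymem : y ∈ Finset.univ.filter fun z => z ≠ x ∧ ∃ f ∈ E, x ∈ f ∧ z ∈ f := by
      rw [heq2]
      exact Finset.mem_erase.2 ⟨hyx, Finset.mem_univ y⟩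
    exact (Finset.mem_filter.1 hymem).2.2

lemma all_small {E : Finset (Finset V)} (hlin : Linear E) {r : Finset V} (hr : r ∈ E)
    (hd : 2 ≤ r.card)
    (hDeq : maxDeg2 E = r.card ^ 2 - 1)
    (hstr : ∀ x ∈ r, (∀ g ∈ E, x ∈ g → g.card = r.card) ∧
      (Kset E r x).card = r.card ∧ (∀ y : V, y ≠ x → ∃ f ∈ E, x ∈ f ∧ y ∈ f)) :
    ∀ g ∈ E, g.card ≤ r.card := by
  intro g hg
  by_contra hcon
  push_neg at hcon
  have hgne : g.Nonempty := Finset.card_pos.1 (by omega)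
  obtain ⟨y, hy⟩ := hgne
  by_cases hyr : y ∈ r
  · have := (hstr y hyr).1 g hg hy
    omega
  · -- y outside r
    set F := E.filter (fun f => y ∈ f ∧ (f ∩ r).Nonempty) with hF
    have hFcard : r.card ≤ F.card := by
      apply Finset.card_le_card_of_surjOn
        (fun f => if h : (f ∩ r).Nonempty then h.choose else y)
      intro x hx
      rw [Finset.mem_coe] at hx
      rw [Set.mem_image]
      obtain ⟨f, hfE, hxf, hyf⟩ := (hstr x hx).2.2 y (fun h => hyr (h ▸ hx))
      have hfr : (f ∩ r).Nonempty := ⟨x, Finset.mem_inter.2 ⟨hxf, hx⟩⟩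
      refine ⟨f, Finset.mem_coe.2 (Finset.mem_filter.2 ⟨hfE, hyf, hfr⟩), ?_⟩
      simp only [dif_pos hfr]
      have hch := Finset.mem_inter.1 hfr.choose_spec
      have hfnr : f ≠ r := fun h => hyr (h ▸ hyf)
      have hle := hlin f hfE r hr hfnr
      by_contra hne
      have := two_le_inter_card hch.1 hch.2 hxf hx hne
      omega
    -- now the degree contradiction at y
    obtain ⟨m, hm⟩ : ∃ m, r.card = m + 2 := ⟨r.card - 2, by omega⟩
    have hgF : g ∉ F := by
      intro hgmem
      obtain ⟨-, -, hgr⟩ := Finset.mem_filter.1 hgmem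
      obtain ⟨x, hx⟩ := hgr
      rw [Finset.mem_inter] at hx
      have := (hstr x hx.2).1 g hg hx.1
      omega
    have hGsub : insert g F ⊆ E := by
      intro a ha
      rcases Finset.mem_insert.1 ha with rfl | ha
      · exact hg
      · exact (Finset.mem_filter.1 ha).1
    have hGmem : ∀ f ∈ insert g F, y ∈ f := by
      intro f hf
      rcases Finset.mem_insert.1 hf with rfl | hf
      · exact hy
      · exact (Finset.mem_filter.1 hf).2.1
    have h1 := sum_card_le_deg2 hlin y hGsub hGmem
    rw [Finset.sum_insert hgF] at h1
    have hFsum : F.card * (m + 1) ≤ ∑ f ∈ F, (f.card - 1) := by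
      have := Finset.card_nsmul_le_sum F (fun f => f.card - 1) (m + 1)
        (fun f hf => by
          obtain ⟨hfE, hyf, hfr⟩ := Finset.mem_filter.1 hf
          obtain ⟨x, hx⟩ := hfr
          rw [Finset.mem_inter] at hx
          have := (hstr x hx.2).1 f hfE hx.1
          show m + 1 ≤ f.card - 1
          omega)
      simpa using this
    have hFbig : (m + 2) * (m + 1) ≤ ∑ f ∈ F, (f.card - 1) := by
      calc (m + 2) * (m + 1) ≤ F.card * (m + 1) := mul_le_mul_left (by omega) (m + 1)
        _ ≤ _ := hFsum
    have hdeg := deg2_le_maxDeg2 E y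
    rw [hDeq] at hdeg
    have hsq : r.card ^ 2 = m * m + 4 * m + 4 := by rw [hm]; ring
    have e7 : (m + 2) * (m + 1) = m * m + 3 * m + 2 := by ring
    omega

lemma parent_exists {E : Finset (Finset V)} {r : Finset V}
    (hstr : ∀ x ∈ r, (∀ g ∈ E, x ∈ g → g.card = r.card) ∧
      (Kset E r x).card = r.card ∧ (∀ y : V, y ≠ x → ∃ f ∈ E, x ∈ f ∧ y ∈ f))
    {e : Finset V} (hdisj : e ∩ r = ∅) {y : V} (hy : y ∈ e) {x : V} (hx : x ∈ r) :
    ∃ p ∈ E, p ≠ e ∧ p ≠ r ∧ x ∈ p ∧ y ∈ p ∧ (p ∩ e).Nonempty ∧ (p ∩ r).Nonempty ∧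
      p.card = r.card := by
  have hyx : y ≠ x := by
    rintro rfl
    have : y ∈ e ∩ r := Finset.mem_inter.2 ⟨hy, hx⟩
    rw [hdisj] at this
    exact absurd this (Finset.notMem_empty y)
  obtain ⟨p, hpE, hxp, hyp⟩ := (hstr x hx).2.2 y hyx
  have hxnote : x ∉ e := by
    intro hxe
    have : x ∈ e ∩ r := Finset.mem_inter.2 ⟨hxe, hx⟩
    rw [hdisj] at this
    exact absurd this (Finset.notMem_empty x)
  have hynotr : y ∉ r := by
    intro hyr
    have : y ∈ e ∩ r := Finset.mem_inter.2 ⟨hy, hyr⟩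
    rw [hdisj] at this
    exact absurd this (Finset.notMem_empty y)
  refine ⟨p, hpE, ?_, ?_, hxp, hyp, ⟨y, Finset.mem_inter.2 ⟨hyp, hy⟩⟩,
    ⟨x, Finset.mem_inter.2 ⟨hxp, hx⟩⟩, (hstr x hx).1 p hpE hxp⟩
  · rintro rfl
    exact hxnote hxp
  · rintro rfl
    exact hynotr hyp

lemma pair_exists {E : Finset (Finset V)} (hlin : Linear E) {r : Finset V} (hr : r ∈ E)
    (hd : 2 ≤ r.card)
    (hstr : ∀ x ∈ r, (∀ g ∈ E, x ∈ g → g.card = r.card) ∧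
      (Kset E r x).card = r.card ∧ (∀ y : V, y ≠ x → ∃ f ∈ E, x ∈ f ∧ y ∈ f)) :
    ∃ f₁ f₂ : Finset V, f₁ ∈ E ∧ f₂ ∈ E ∧ f₁ ≠ f₂ ∧ f₁ ∩ f₂ = ∅ ∧ f₁ ≠ r ∧ f₂ ≠ r ∧
      (f₁ ∩ r).Nonempty ∧ (f₂ ∩ r).Nonempty ∧ r.card ≤ f₁.card ∧ r.card ≤ f₂.card := by
  obtain ⟨x₁, hx₁, x₂, hx₂, hx12⟩ := Finset.one_lt_card.1 (by omega : 1 < r.card)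
  have hK1ne : (Kset E r x₁).Nonempty := by
    rw [← Finset.card_pos, (hstr x₁ hx₁).2.1]
    omega
  obtain ⟨f₁, hf₁⟩ := hK1ne
  obtain ⟨hf₁E, hx₁f₁, hf₁r, hf₁card⟩ := Finset.mem_filter.1 hf₁
  have hx₂f₁ : x₂ ∉ f₁ := by
    intro hmem
    have h2 := two_le_inter_card hx₁f₁ hx₁ hmem hx₂ hx12
    have := hlin f₁ hf₁E r hr hf₁r
    omega
  set A := (Kset E r x₂).filter (fun g => (g ∩ f₁).Nonempty) with hA
  have hAcard : A.card ≤ (f₁.erase x₁).card := by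
    apply Finset.card_le_card_of_injOn
      (fun g => if h : (g ∩ f₁).Nonempty then h.choose else x₁)
    · intro g hgA
      obtain ⟨hgK, hgf⟩ := Finset.mem_filter.1 hgA
      obtain ⟨hgE, hx₂g, hgr, hgcard⟩ := Finset.mem_filter.1 hgK
      simp only [dif_pos hgf]
      have hch := Finset.mem_inter.1 hgf.choose_spec
      refine Finset.mem_erase.2 ⟨?_, hch.2⟩
      rintro rfl
      have h2 := two_le_inter_card hch.1 hx₁ hx₂g hx₂ hx12
      have := hlin g hgE r hr hgr
      omega
    · intro g hgA g' hgA' heq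
      rw [Finset.mem_coe] at hgA hgA'
      obtain ⟨hgK, hgf⟩ := Finset.mem_filter.1 hgA
      obtain ⟨hgK', hgf'⟩ := Finset.mem_filter.1 hgA'
      simp only [dif_pos hgf, dif_pos hgf'] at heq
      obtain ⟨hgE, hx₂g, hgr, -⟩ := Finset.mem_filter.1 hgK
      obtain ⟨hgE', hx₂g', hgr', -⟩ := Finset.mem_filter.1 hgK'
      by_contra hne
      have hch := Finset.mem_inter.1 hgf.choose_spec
      have hch' := Finset.mem_inter.1 hgf'.choose_spec
      have hwf₁ : hgf.choose ∈ f₁ := hch.2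
      have hwne : hgf.choose ≠ x₂ := fun h => hx₂f₁ (h ▸ hwf₁)
      have hchg' : hgf.choose ∈ g' := by rw [heq]; exact hch'.1
      have h2 := two_le_inter_card hch.1 hchg' hx₂g hx₂g' hwne
      have := hlin g hgE g' hgE' hne
      omega
  have hf₁c : f₁.card = r.card := (hstr x₁ hx₁).1 f₁ hf₁E hx₁f₁
  have hAlt : A.card < (Kset E r x₂).card := by
    rw [(hstr x₂ hx₂).2.1]
    have : (f₁.erase x₁).card = r.card - 1 := by
      rw [Finset.card_erase_of_mem hx₁f₁, hf₁c]
    omega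
  have hex : ∃ f₂ ∈ Kset E r x₂, f₂ ∉ A := by
    by_contra hcon
    push_neg at hcon
    have hsub : Kset E r x₂ ⊆ A := hcon
    have := Finset.card_le_card hsub
    omega
  obtain ⟨f₂, hf₂K, hf₂A⟩ := hex
  obtain ⟨hf₂E, hx₂f₂, hf₂r, hf₂card⟩ := Finset.mem_filter.1 hf₂K
  have hf₂f₁ : (f₂ ∩ f₁) = ∅ := by
    rw [← Finset.not_nonempty_iff_eq_empty]
    intro hne
    exact hf₂A (Finset.mem_filter.2 ⟨hf₂K, hne⟩)
  have hf₁f₂ : f₁ ∩ f₂ = ∅ := by rw [Finset.inter_comm]; exact hf₂f₁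
  have hne12 : f₁ ≠ f₂ := by
    rintro rfl
    have : x₁ ∈ f₁ ∩ f₁ := Finset.mem_inter.2 ⟨hx₁f₁, hx₁f₁⟩
    rw [hf₁f₂] at this
    exact absurd this (Finset.notMem_empty x₁)
  exact ⟨f₁, f₂, hf₁E, hf₂E, hne12, hf₁f₂, hf₁r, hf₂r,
    ⟨x₁, Finset.mem_inter.2 ⟨hx₁f₁, hx₁⟩⟩, ⟨x₂, Finset.mem_inter.2 ⟨hx₂f₂, hx₂⟩⟩,
    hf₁card, hf₂card⟩

lemma greedy {q : ℕ} (hq : 0 < q) (E : Finset (Finset V)) (f₁ f₂ : Finset V)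
    (hff : f₁ ∩ f₂ = ∅) (key : Finset V → ℕ)
    (H : ∀ S ⊆ E, ∀ e ∈ S, e ≠ f₁ → e ≠ f₂ →
      (∀ g ∈ S, g ≠ f₁ → g ≠ f₂ → key e ≤ key g) →
      (((S.erase e).filter fun g => (g ∩ e).Nonempty).card < q ∨
       (((S.erase e).filter fun g => (g ∩ e).Nonempty).card ≤ q ∧
        f₁ ∈ (S.erase e).filter (fun g => (g ∩ e).Nonempty) ∧
        f₂ ∈ (S.erase e).filter (fun g => (g ∩ e).Nonempty) ∧ f₁ ≠ f₂))) :
    ∀ S ⊆ E, ∃ c : Finset V → Fin q,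
      (∀ a ∈ S, ∀ b ∈ S, a ≠ b → (a ∩ b).Nonempty → c a ≠ c b) ∧
      (f₁ ∈ S → f₂ ∈ S → c f₁ = c f₂) := by
  suffices h : ∀ m : ℕ, ∀ S ⊆ E, S.card ≤ m → ∃ c : Finset V → Fin q,
      (∀ a ∈ S, ∀ b ∈ S, a ≠ b → (a ∩ b).Nonempty → c a ≠ c b) ∧
      (f₁ ∈ S → f₂ ∈ S → c f₁ = c f₂) by
    intro S hS
    exact h S.card S hS le_rfl
  intro m
  induction m with
  | zero =>
    intro S _ hScard
    have hSempty : S = ∅ := Finset.card_eq_zero.1 (by omega)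
    subst hSempty
    exact ⟨fun _ => ⟨0, hq⟩, fun a ha => absurd ha (Finset.notMem_empty a),
      fun h => absurd h (Finset.notMem_empty f₁)⟩
  | succ m ih =>
    intro S hSE hScard
    by_cases hne : (S \ {f₁, f₂}).Nonempty
    · obtain ⟨e, he, hmin⟩ := Finset.exists_min_image _ key hne
      have heS : e ∈ S := (Finset.mem_sdiff.1 he).1
      have hef : e ∉ ({f₁, f₂} : Finset (Finset V)) := (Finset.mem_sdiff.1 he).2
      simp only [Finset.mem_insert, Finset.mem_singleton] at hef
      push_neg at hef
      obtain ⟨hef₁, hef₂⟩ := hef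
      obtain ⟨c, hc, hcp⟩ := ih (S.erase e) ((Finset.erase_subset e S).trans hSE)
        (by rw [Finset.card_erase_of_mem heS]; omega)
      have hmin' : ∀ g ∈ S, g ≠ f₁ → g ≠ f₂ → key e ≤ key g := by
        intro g hg h1 h2
        exact hmin g (Finset.mem_sdiff.2 ⟨hg, by simp [h1, h2]⟩)
      have hH := H S hSE e heS hef₁ hef₂ hmin'
      set B := (S.erase e).filter (fun g => (g ∩ e).Nonempty) with hBdef
      have himg : (B.image c).card < q := by
        rcases hH with h | ⟨hq', h1, h2, h12⟩
        · exact lt_of_le_of_lt Finset.card_image_le h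
        · have hceq : c f₁ = c f₂ :=
            hcp (Finset.mem_of_mem_filter _ h1) (Finset.mem_of_mem_filter _ h2)
          have hsub : B.image c ⊆ (B.erase f₁).image c := by
            intro col hcol
            obtain ⟨g, hg, rfl⟩ := Finset.mem_image.1 hcol
            by_cases hgf : g = f₁
            · subst hgf
              exact Finset.mem_image.2 ⟨f₂, Finset.mem_erase.2 ⟨h12.symm, h2⟩, hceq.symm⟩
            · exact Finset.mem_image.2 ⟨g, Finset.mem_erase.2 ⟨hgf, hg⟩, rfl⟩
          have hc1 := Finset.card_le_card hsub
          have hc2 := Finset.card_image_le (s := B.erase f₁) (f := c)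
          have hc3 : (B.erase f₁).card = B.card - 1 := Finset.card_erase_of_mem h1
          have hc4 : 1 ≤ B.card := Finset.card_pos.2 ⟨f₁, h1⟩
          omega
      have hfresh : ∃ col : Fin q, col ∉ B.image c := by
        have hlt : (B.image c).card < (Finset.univ : Finset (Fin q)).card := by
          rw [Finset.card_univ, Fintype.card_fin]; exact himg
        have hne2 : (Finset.univ \ B.image c).Nonempty := by
          rw [← Finset.card_pos, Finset.card_sdiff_of_subset (Finset.subset_univ (B.image c))]
          omega
        obtain ⟨col, hcol⟩ := hne2
        exact ⟨col, (Finset.mem_sdiff.1 hcol).2⟩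
      obtain ⟨col, hcol⟩ := hfresh
      refine ⟨Function.update c e col, ?_, ?_⟩
      · intro a ha b hb hab hint
        by_cases hae : a = e
        · subst hae
          have hbe : b ≠ a := fun h => hab h.symm
          have hbB : b ∈ B := Finset.mem_filter.2 ⟨Finset.mem_erase.2 ⟨hbe, hb⟩,
            by rwa [Finset.inter_comm] at hint⟩
          rw [Function.update_self, Function.update_of_ne hbe]
          intro heq
          exact hcol (heq ▸ Finset.mem_image_of_mem c hbB)
        · by_cases hbe : b = e
          · subst hbe
            have haB : a ∈ B := Finset.mem_filter.2 ⟨Finset.mem_erase.2 ⟨hae, ha⟩, hint⟩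
            rw [Function.update_self, Function.update_of_ne hae]
            intro heq
            exact hcol (heq ▸ Finset.mem_image_of_mem c haB)
          · rw [Function.update_of_ne hae, Function.update_of_ne hbe]
            exact hc a (Finset.mem_erase.2 ⟨hae, ha⟩) b (Finset.mem_erase.2 ⟨hbe, hb⟩) hab hint
      · intro h1 h2
        have hne1 : f₁ ≠ e := fun h => hef₁ h.symm
        have hne2 : f₂ ≠ e := fun h => hef₂ h.symm
        rw [Function.update_of_ne hne1, Function.update_of_ne hne2]
        exact hcp (Finset.mem_erase.2 ⟨hne1, h1⟩) (Finset.mem_erase.2 ⟨hne2, h2⟩)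
    · have hsub : S ⊆ {f₁, f₂} := by
        rw [← Finset.sdiff_eq_empty_iff_subset]
        exact Finset.not_nonempty_iff_eq_empty.1 hne
      refine ⟨fun _ => ⟨0, hq⟩, ?_, fun _ _ => rfl⟩
      intro a ha b hb hab hint
      exfalso
      have ha' := hsub ha
      have hb' := hsub hb
      simp only [Finset.mem_insert, Finset.mem_singleton] at ha' hb'
      rcases ha' with rfl | rfl <;> rcases hb' with rfl | rfl
      · exact hab rfl
      · rw [hff] at hint; exact Finset.not_nonempty_empty hint
      · rw [Finset.inter_comm, hff] at hint; exact Finset.not_nonempty_empty hint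
      · exact hab rfl

end Aux

theorem stmt19 {V : Type*} [Fintype V] [DecidableEq V]
    (E E' E'' : Finset (Finset V)) (n : ℕ) (hn : n = Fintype.card V)
    (hlin : Linear E) (hloop : ∀ e ∈ E, 2 ≤ e.card)
    (hunion : E = E' ∪ E'') (hdisj : Disjoint E' E'')
    (h1 : ∀ e ∈ E', n ≤ e.card ^ 2)
    (h2 : ∀ e ∈ E'', e.card ^ 2 < n)
    (h3 : ∀ e ∈ E'', ∃ x ∈ e, hyperDeg E x ≤ e.card) :
    chromIndex E ≤ maxDeg2 E + 1 := by
  set D := maxDeg2 E with hDdef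
  suffices hcol : ColorableWith E (D + 1) by exact Nat.sInf_le hcol
  by_cases hbad : ∃ r ∈ E, D + 1 ≤ (Tset E r).card
  · -- CASE 2: some bad edge exists
    obtain ⟨r, hrE, hbadr⟩ := hbad
    have hrd : 2 ≤ r.card := hloop r hrE
    have hrE'' : r ∉ E'' := by
      intro hr''
      obtain ⟨x₀, hx₀, hdeg⟩ := h3 r hr''
      have := small_edge_bound hlin hrE hrd hx₀ hdeg
      omega
    have hrE' : r ∈ E' := by
      have := hrE
      rw [hunion] at this
      rcases Finset.mem_union.1 this with h | h
      · exact h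
      · exact absurd h hrE''
    have hn2 : Fintype.card V ≤ r.card ^ 2 := by
      have := h1 r hrE'
      omega
    obtain ⟨hDeq, hneq, hstr⟩ := bad_structure hlin hloop hrE hn2 hbadr
    have hsmall := all_small hlin hrE hrd hDeq hstr
    have huniform : ∀ g ∈ E', g.card = r.card := by
      intro g hg'
      have hgE : g ∈ E := by rw [hunion]; exact Finset.mem_union_left _ hg'
      have h1' := h1 g hg'
      have h2' := hsmall g hgE
      have hle : r.card ≤ g.card := by
        have hsq : r.card ^ 2 ≤ g.card ^ 2 := by omega
        by_contra hcon
        push_neg at hcon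
        have := Nat.pow_le_pow_left (le_of_lt hcon) 2
        have hgr : g.card < r.card := hcon
        nlinarith
      omega
    have hsmall'' : ∀ g ∈ E'', g.card < r.card := by
      intro g hg''
      have := h2 g hg''
      by_contra hcon
      push_neg at hcon
      have := Nat.pow_le_pow_left hcon 2
      omega
    have hEsplit : ∀ g ∈ E, g ∉ E'' → g ∈ E' := by
      intro g hg hg''
      rw [hunion] at hg
      rcases Finset.mem_union.1 hg with h | h
      · exact h
      · exact absurd h hg''
    have hnotE'' : ∀ g ∈ E, g.card = r.card → g ∉ E'' := by
      intro g _ hcard hg''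
      have := hsmall'' g hg''
      omega
    -- S6
    have hS6 : ∀ e ∈ E', (Tset E e).card ≤ D + 1 := by
      intro e he'
      have heE : e ∈ E := by rw [hunion]; exact Finset.mem_union_left _ he'
      have hecard : e.card = r.card := huniform e he'
      obtain ⟨m, hm⟩ : ∃ m, r.card = m + 2 := ⟨r.card - 2, by omega⟩
      have hKle : ∀ x ∈ e, (Kset E e x).card ≤ m + 2 := by
        intro x hx
        have hKb := Kset_bound hlin heE hx
        have hdeg := deg2_le_maxDeg2 E x
        have h5 : ((Kset E e x).card + 1) * (m + 1) ≤ D := by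
          have : e.card - 1 = m + 1 := by omega
          rw [this] at hKb
          omega
        have hfac : (m + 3) * (m + 1) = D := by
          have hsq : r.card ^ 2 = m * m + 4 * m + 4 := by rw [hm]; ring
          have e3 : (m + 3) * (m + 1) = m * m + 4 * m + 3 := by ring
          omega
        rw [← hfac] at h5
        have := Nat.le_of_mul_le_mul_right h5 (by omega : 0 < m + 1)
        omega
      rw [Tset_card_eq hlin heE]
      have hsum := Finset.sum_le_card_nsmul e (fun x => (Kset E e x).card) (m + 2) hKle
      rw [hecard, hm] at hsum
      simp only [smul_eq_mul] at hsum
      have hsq : r.card ^ 2 = (m + 2) * (m + 2) := by rw [hm]; ring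
      omega
    obtain ⟨f₁, f₂, hf₁E, hf₂E, hne12, hff, hf₁r, hf₂r, hf₁int, hf₂int, hf₁card, hf₂card⟩ :=
      pair_exists hlin hrE hrd hstr
    set n' := Fintype.card V with hn'
    set key : Finset V → ℕ := fun g =>
      if g ∈ E'' then g.card else if g = r then n' + 1
      else if (g ∩ r).Nonempty then n' + 2 else n' + 3 with hkeydef
    have hkeyE'' : ∀ g ∈ E'', key g = g.card := by
      intro g hg; simp [hkeydef, hg]
    have hkeyr : key r = n' + 1 := by simp [hkeydef, hrE'']
    have hkey1 : ∀ g, g ∉ E'' → g ≠ r → (g ∩ r).Nonempty → key g = n' + 2 := by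
      intro g ha hb hc; simp [hkeydef, ha, hb, hc]
    have hkey2 : ∀ g, g ∉ E'' → g ≠ r → ¬(g ∩ r).Nonempty → key g = n' + 3 := by
      intro g ha hb hc; simp [hkeydef, ha, hb, hc]
    have hH : ∀ S ⊆ E, ∀ e ∈ S, e ≠ f₁ → e ≠ f₂ →
        (∀ g ∈ S, g ≠ f₁ → g ≠ f₂ → key e ≤ key g) →
        (((S.erase e).filter fun g => (g ∩ e).Nonempty).card < D + 1 ∨
         (((S.erase e).filter fun g => (g ∩ e).Nonempty).card ≤ D + 1 ∧
          f₁ ∈ (S.erase e).filter (fun g => (g ∩ e).Nonempty) ∧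
          f₂ ∈ (S.erase e).filter (fun g => (g ∩ e).Nonempty) ∧ f₁ ≠ f₂)) := by
      intro S hSE e heS he1 he2 hkey
      have heE : e ∈ E := hSE heS
      set B := (S.erase e).filter (fun g => (g ∩ e).Nonempty) with hBdef
      by_cases heE'' : e ∈ E''
      · -- small edge: plain bound
        left
        have hBsub : B ⊆ Tset E e := by
          intro g hgB
          obtain ⟨hge, hgint⟩ := Finset.mem_filter.1 hgB
          have hgS : g ∈ S := Finset.mem_of_mem_erase hge
          have hgne : g ≠ e := Finset.ne_of_mem_erase hge
          refine Finset.mem_filter.2 ⟨hSE hgS, hgne, hgint, ?_⟩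
          have hesmall : e.card < r.card := hsmall'' e heE''
          by_cases hg1 : g = f₁
          · subst hg1; omega
          by_cases hg2 : g = f₂
          · subst hg2; omega
          have hk := hkey g hgS hg1 hg2
          rw [hkeyE'' e heE''] at hk
          by_cases hgE'' : g ∈ E''
          · rw [hkeyE'' g hgE''] at hk; exact hk
          · have hgE' := hEsplit g (hSE hgS) hgE''
            have := huniform g hgE'
            omega
        obtain ⟨x₀, hx₀, hdeg⟩ := h3 e heE''
        have hT := small_edge_bound hlin heE (hloop e heE) hx₀ hdeg
        have := Finset.card_le_card hBsub
        omega
      · -- big edge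
        have heE' := hEsplit e heE heE''
        have hecard : e.card = r.card := huniform e heE'
        have hBsub : B ⊆ Tset E e := by
          intro g hgB
          obtain ⟨hge, hgint⟩ := Finset.mem_filter.1 hgB
          have hgS : g ∈ S := Finset.mem_of_mem_erase hge
          have hgne : g ≠ e := Finset.ne_of_mem_erase hge
          refine Finset.mem_filter.2 ⟨hSE hgS, hgne, hgint, ?_⟩
          by_cases hg1 : g = f₁
          · subst hg1; omega
          by_cases hg2 : g = f₂
          · subst hg2; omega
          have hk := hkey g hgS hg1 hg2
          by_cases hgE'' : g ∈ E''
          · exfalso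
            rw [hkeyE'' g hgE''] at hk
            have hgcard : g.card ≤ n' := by
              rw [hn']; exact Finset.card_le_univ g
            have hkeyelb : n' + 1 ≤ key e := by
              by_cases h4 : e = r
              · rw [h4, hkeyr]
              · by_cases h5 : (e ∩ r).Nonempty
                · rw [hkey1 e heE'' h4 h5]; omega
                · rw [hkey2 e heE'' h4 h5]; omega
            omega
          · have hgE' := hEsplit g (hSE hgS) hgE''
            have := huniform g hgE'
            omega
        by_cases hbade : D + 1 ≤ (Tset E e).card
        · -- e is bad
          by_cases her : e = r
          · subst her
            by_cases hf₁S : f₁ ∈ S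
            · by_cases hf₂S : f₂ ∈ S
              · right
                refine ⟨le_trans (Finset.card_le_card hBsub) (hS6 e heE'), ?_, ?_, hne12⟩
                · exact Finset.mem_filter.2 ⟨Finset.mem_erase.2 ⟨Ne.symm he1, hf₁S⟩, hf₁int⟩
                · exact Finset.mem_filter.2 ⟨Finset.mem_erase.2 ⟨Ne.symm he2, hf₂S⟩, hf₂int⟩
              · left
                have hpT : f₂ ∈ Tset E e :=
                  Finset.mem_filter.2 ⟨hf₂E, hf₂r, hf₂int, hf₂card⟩
                have hBsub2 : B ⊆ (Tset E e).erase f₂ := by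
                  intro g hgB
                  refine Finset.mem_erase.2 ⟨?_, hBsub hgB⟩
                  rintro rfl
                  exact hf₂S (Finset.mem_of_mem_erase (Finset.mem_of_mem_filter _ hgB))
                have hcards := Finset.card_le_card hBsub2
                rw [Finset.card_erase_of_mem hpT] at hcards
                have := hS6 e heE'
                omega
            · left
              have hpT : f₁ ∈ Tset E e :=
                Finset.mem_filter.2 ⟨hf₁E, hf₁r, hf₁int, hf₁card⟩
              have hBsub2 : B ⊆ (Tset E e).erase f₁ := by
                intro g hgB
                refine Finset.mem_erase.2 ⟨?_, hBsub hgB⟩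
                rintro rfl
                exact hf₁S (Finset.mem_of_mem_erase (Finset.mem_of_mem_filter _ hgB))
              have hcards := Finset.card_le_card hBsub2
              rw [Finset.card_erase_of_mem hpT] at hcards
              have := hS6 e heE'
              omega
          · by_cases hint : (e ∩ r).Nonempty
            · -- level 1 bad edge: r must be absent from S
              left
              have hrS : r ∉ S := by
                intro hrS
                have hk := hkey r hrS (Ne.symm hf₁r) (Ne.symm hf₂r)
                rw [hkey1 e heE'' her hint, hkeyr] at hk
                omega
              have hrT : r ∈ Tset E e := by
                refine Finset.mem_filter.2 ⟨hrE, fun h => her h.symm, ?_, by omega⟩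
                rwa [Finset.inter_comm]
              have hBsub2 : B ⊆ (Tset E e).erase r := by
                intro g hgB
                refine Finset.mem_erase.2 ⟨?_, hBsub hgB⟩
                rintro rfl
                exact hrS (Finset.mem_of_mem_erase (Finset.mem_of_mem_filter _ hgB))
              have hcards := Finset.card_le_card hBsub2
              rw [Finset.card_erase_of_mem hrT] at hcards
              have := hS6 e heE'
              omega
            · -- level 2 bad edge
              have hdisj2 : e ∩ r = ∅ := Finset.not_nonempty_iff_eq_empty.1 hint
              obtain ⟨y, hy⟩ : e.Nonempty := Finset.card_pos.1 (by omega)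
              obtain ⟨x₁, hx₁, x₂, hx₂, hx12⟩ := Finset.one_lt_card.1 (by omega : 1 < r.card)
              obtain ⟨p₁, hp₁E, hp₁e, hp₁r, hx₁p₁, hyp₁, hp₁int, hp₁rint, hp₁card⟩ :=
                parent_exists hstr hdisj2 hy hx₁
              obtain ⟨p₂, hp₂E, hp₂e, hp₂r, hx₂p₂, hyp₂, hp₂int, hp₂rint, hp₂card⟩ :=
                parent_exists hstr hdisj2 hy hx₂
              have hp12 : p₁ ≠ p₂ := by
                rintro rfl
                have h2' := two_le_inter_card hx₁p₁ hx₁ hx₂p₂ hx₂ hx12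
                have := hlin p₁ hp₁E r hrE hp₁r
                omega
              have hkeyp : ∀ p, p ∈ E → p ≠ r → p.card = r.card → (p ∩ r).Nonempty →
                  key p = n' + 2 := fun p hpE hpr hpcard hpint =>
                hkey1 p (hnotE'' p hpE hpcard) hpr hpint
              have hpT : ∀ p, p ∈ E → p ≠ e → (p ∩ e).Nonempty → p.card = r.card →
                  p ∈ Tset E e := by
                intro p hpE hpe hpint hpcard
                exact Finset.mem_filter.2 ⟨hpE, hpe, hpint, by omega⟩
              by_cases hp₁S : p₁ ∈ S
              · by_cases hp₂S : p₂ ∈ S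
                · -- both parents present: they must be the special pair
                  have hkeye : key e = n' + 3 := hkey2 e heE'' her hint
                  have hpf : ∀ p, p ∈ S → p ∈ E → p ≠ r → p.card = r.card →
                      (p ∩ r).Nonempty → p = f₁ ∨ p = f₂ := by
                    intro p hpS hpE hpr hpcard hpint
                    by_contra hcon
                    push_neg at hcon
                    have hk := hkey p hpS hcon.1 hcon.2
                    rw [hkeye, hkeyp p hpE hpr hpcard hpint] at hk
                    omega
                  have h1' := hpf p₁ hp₁S hp₁E hp₁r hp₁card hp₁rint
                  have h2' := hpf p₂ hp₂S hp₂E hp₂r hp₂card hp₂rint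
                  have hmemB : ∀ p, p ∈ S → p ≠ e → (p ∩ e).Nonempty →
                      p ∈ (S.erase e).filter (fun g => (g ∩ e).Nonempty) :=
                    fun p hS' hne' hint' =>
                      Finset.mem_filter.2 ⟨Finset.mem_erase.2 ⟨hne', hS'⟩, hint'⟩
                  right
                  refine ⟨le_trans (Finset.card_le_card hBsub) (hS6 e heE'), ?_, ?_, hne12⟩
                  · rcases h1' with h | h
                    · rw [← h]; exact hmemB p₁ hp₁S hp₁e hp₁int
                    · rcases h2' with h' | h'
                      · rw [← h']; exact hmemB p₂ hp₂S hp₂e hp₂int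
                      · exact absurd (h.trans h'.symm) hp12
                  · rcases h2' with h' | h'
                    · rcases h1' with h | h
                      · exact absurd (h.trans h'.symm) hp12
                      · rw [← h]; exact hmemB p₁ hp₁S hp₁e hp₁int
                    · rw [← h']; exact hmemB p₂ hp₂S hp₂e hp₂int
                · left
                  have hpT2 := hpT p₂ hp₂E hp₂e hp₂int hp₂card
                  have hBsub2 : B ⊆ (Tset E e).erase p₂ := by
                    intro g hgB
                    refine Finset.mem_erase.2 ⟨?_, hBsub hgB⟩
                    rintro rfl
                    exact hp₂S (Finset.mem_of_mem_erase (Finset.mem_of_mem_filter _ hgB))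
                  have hcards := Finset.card_le_card hBsub2
                  rw [Finset.card_erase_of_mem hpT2] at hcards
                  have := hS6 e heE'
                  omega
              · left
                have hpT1 := hpT p₁ hp₁E hp₁e hp₁int hp₁card
                have hBsub2 : B ⊆ (Tset E e).erase p₁ := by
                  intro g hgB
                  refine Finset.mem_erase.2 ⟨?_, hBsub hgB⟩
                  rintro rfl
                  exact hp₁S (Finset.mem_of_mem_erase (Finset.mem_of_mem_filter _ hgB))
                have hcards := Finset.card_le_card hBsub2
                rw [Finset.card_erase_of_mem hpT1] at hcards
                have := hS6 e heE'
                omega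
        · left
          have := Finset.card_le_card hBsub
          omega
    obtain ⟨c, hc, -⟩ := greedy (by omega) E f₁ f₂ hff key hH E Finset.Subset.rfl
    exact ⟨c, hc⟩
  · -- CASE 1: no bad edge, plain greedy by size
    push_neg at hbad
    have hH : ∀ S ⊆ E, ∀ e ∈ S, e ≠ (∅ : Finset V) → e ≠ (∅ : Finset V) →
        (∀ g ∈ S, g ≠ (∅ : Finset V) → g ≠ (∅ : Finset V) → e.card ≤ g.card) →
        (((S.erase e).filter fun g => (g ∩ e).Nonempty).card < D + 1 ∨
         (((S.erase e).filter fun g => (g ∩ e).Nonempty).card ≤ D + 1 ∧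
          (∅ : Finset V) ∈ (S.erase e).filter (fun g => (g ∩ e).Nonempty) ∧
          (∅ : Finset V) ∈ (S.erase e).filter (fun g => (g ∩ e).Nonempty) ∧
          (∅ : Finset V) ≠ (∅ : Finset V))) := by
      intro S hSE e heS _ _ hkey
      left
      have hBsub : (S.erase e).filter (fun g => (g ∩ e).Nonempty) ⊆ Tset E e := by
        intro g hgB
        obtain ⟨hge, hgint⟩ := Finset.mem_filter.1 hgB
        have hgS : g ∈ S := Finset.mem_of_mem_erase hge
        have hgne : g ≠ e := Finset.ne_of_mem_erase hge
        refine Finset.mem_filter.2 ⟨hSE hgS, hgne, hgint, ?_⟩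
        have hg2 := hloop g (hSE hgS)
        have hgne0 : g ≠ (∅ : Finset V) := by
          intro h
          rw [h] at hg2
          simp at hg2
        exact hkey g hgS hgne0 hgne0
      have := Finset.card_le_card hBsub
      have := hbad e (hSE heS)
      omega
    obtain ⟨c, hc, -⟩ := greedy (by omega) E ∅ ∅ (by simp) (fun g => g.card) hH
      E Finset.Subset.rfl
    exact ⟨c, hc⟩
end
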